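/- arXiv:1905.13182 — 3 statements merged into one kernel-verified Lean document; each statement's English description precedes it below -/
import Mathlib

section
/- Let G be a connected finite graph with n vertices, m edges, and Betti number r = m − n + 1 > 1. Then lim_{t→1} (1−t)^{−r} · Z(G,t)^{−1} = 2^r · χ(G) · κ(G), where χ(G) = 1 − r is the Euler number of G and κ(G) is the number of spanning trees of G. Equivalently, using Bass's formula Z(G,t)^{-1} = (1−t^2)^{m−n} det(I_n − t·A(G) + t^2·Q), one has lim_{t→1} (1−t)^{−r}(1−t^2)^{m−n} det(I_n − t·A(G) + t^2·Q) = 2^r (1−r) κ(G). -/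
open Finset SimpleGraph Filter
open scoped Topology

/-- The complexity `κ(G)`: the number of spanning trees of `G`. -/
noncomputable def numSpanningTrees {V : Type*} (G : SimpleGraph V) : ℕ :=
  Nat.card {T : SimpleGraph V // T ≤ G ∧ T.IsTree}

open Matrix Polynomial
set_option linter.unusedSectionVars false

section CauchyBinet
variable {R : Type*} [CommRing R] {k m : ℕ}

noncomputable def setEmb (s : {s : Finset (Fin m) // s.card = k}) : Fin k → Fin m :=
  s.1.orderEmbOfFin s.2

lemma setEmb_injective (s : {s : Finset (Fin m) // s.card = k}) :
    Function.Injective (setEmb s) :=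
  (s.1.orderEmbOfFin s.2).injective

lemma setEmb_mem (s : {s : Finset (Fin m) // s.card = k}) (i : Fin k) :
    setEmb s i ∈ s.1 :=
  Finset.orderEmbOfFin_mem _ _ _

lemma exists_setEmb_eq (s : {s : Finset (Fin m) // s.card = k}) {a : Fin m} (ha : a ∈ s.1) :
    ∃ i, setEmb s i = a := by
  have := Finset.range_orderEmbOfFin s.1 s.2
  have : a ∈ Set.range (s.1.orderEmbOfFin s.2) := by rw [this]; exact ha
  exact this

noncomputable def toPair (f : Fin k → Fin m) (hf : Function.Injective f) :
    {s : Finset (Fin m) // s.card = k} × Equiv.Perm (Fin k) :=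
  ⟨⟨Finset.image f univ, by rw [Finset.card_image_of_injective _ hf]; simp⟩,
    Equiv.ofBijective (fun i =>
      ((Finset.image f univ).orderIsoOfFin
        (by rw [Finset.card_image_of_injective _ hf]; simp)).symm
        ⟨f i, by simp⟩)
      ((Finite.injective_iff_bijective).mp (fun a b hab => by
        apply hf
        have := congrArg (fun z => ((((Finset.image f univ).orderIsoOfFin
          (by rw [Finset.card_image_of_injective _ hf]; simp))) z : Fin m)) hab
        simpa using this))⟩

lemma toPair_spec (f : Fin k → Fin m) (hf : Function.Injective f) (i : Fin k) :
    setEmb (toPair f hf).1 ((toPair f hf).2 i) = f i := by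
  simp only [toPair, Equiv.ofBijective_apply, setEmb]
  rw [← Finset.coe_orderIsoOfFin_apply]
  simp

theorem cauchy_binet (B : Matrix (Fin k) (Fin m) R) (C : Matrix (Fin m) (Fin k) R) :
    (B * C).det = ∑ s : {s : Finset (Fin m) // s.card = k},
      (B.submatrix id (setEmb s)).det * (C.submatrix (setEmb s) id).det := by
  classical
  have h1 : (B * C).det
      = ∑ f : Fin k → Fin m, (∏ i, B i (f i)) • (C.submatrix f id).det := by
    have e0 : (B * C).det = Matrix.detRowAlternating.toMultilinearMap
        (fun i => ∑ j : Fin m, B i j • C j) := by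
      have h : (fun i => ∑ j : Fin m, B i j • C j) = (B * C : Matrix _ _ R) := by
        funext i; ext l; simp [Matrix.mul_apply]
      rw [show Matrix.detRowAlternating.toMultilinearMap
        (fun i => ∑ j : Fin m, B i j • C j) = Matrix.detRowAlternating
        (fun i => ∑ j : Fin m, B i j • C j) from rfl, h]
      rfl
    rw [e0, Matrix.detRowAlternating.toMultilinearMap.map_sum_finset
      (fun i (j : Fin m) => B i j • C j) (fun _ => univ), Fintype.piFinset_univ]
    refine Finset.sum_congr rfl fun f _ => ?_
    exact Matrix.detRowAlternating.toMultilinearMap.map_smul_univ (fun i => B i (f i))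
      (fun i => C (f i))
  have h2 : ∀ f : Fin k → Fin m, ¬ Function.Injective f →
      (∏ i, B i (f i)) • (C.submatrix f id).det = 0 := by
    intro f hf
    have hz : (C.submatrix f id).det = 0 := by
      apply Matrix.detRowAlternating.map_eq_zero_of_not_injective
      intro hinj
      apply hf
      intro a b hab
      refine hinj ?_
      show C.submatrix f id a = C.submatrix f id b
      funext l; simp [Matrix.submatrix_apply, hab]
    rw [hz, smul_zero]
  rw [h1, ← Finset.sum_filter_of_ne (p := fun f : Fin k → Fin m => Function.Injective f)
    (fun f _ hne => by by_contra h; exact hne (h2 f h))]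
  have key : ∑ f ∈ univ.filter (fun f : Fin k → Fin m => Function.Injective f),
      (∏ i, B i (f i)) • (C.submatrix f id).det
      = ∑ x ∈ (univ : Finset ({s : Finset (Fin m) // s.card = k} × Equiv.Perm (Fin k))),
        (∏ i, B i (setEmb x.1 (x.2 i))) • (C.submatrix (setEmb x.1 ∘ x.2) id).det := by
    refine Finset.sum_bij' (i := fun f hf => toPair f (Finset.mem_filter.mp hf).2)
      (j := fun x _ => setEmb x.1 ∘ x.2) (fun _ _ => Finset.mem_univ _)
      (fun x _ => ?memj) (fun f hf => ?linv) (fun x _ => ?rinv) (fun f hf => ?val)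
    case memj =>
      simp only [Finset.mem_filter, Finset.mem_univ, true_and]
      exact (setEmb_injective x.1).comp x.2.injective
    case linv =>
      funext i
      exact toPair_spec _ _ i
    case rinv =>
      set f : Fin k → Fin m := setEmb x.1 ∘ x.2 with hfdef
      have hf : Function.Injective f := (setEmb_injective x.1).comp x.2.injective
      have h1' : (toPair f hf).1 = x.1 := by
        apply Subtype.ext
        show Finset.image f univ = x.1.1
        ext a
        simp only [Finset.mem_image, Finset.mem_univ, true_and]
        constructor
        · rintro ⟨i, rfl⟩; exact setEmb_mem x.1 (x.2 i)
        · intro ha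
          obtain ⟨i, hi⟩ := exists_setEmb_eq x.1 ha
          exact ⟨x.2.symm i, by simp [hfdef, hi]⟩
      have h2' : setEmb (toPair f hf).1 = setEmb x.1 := by rw [h1']
      have h3' : (toPair f hf).2 = x.2 := by
        apply Equiv.ext
        intro i
        apply setEmb_injective x.1
        calc setEmb x.1 ((toPair f hf).2 i)
            = setEmb (toPair f hf).1 ((toPair f hf).2 i) := by rw [h2']
          _ = f i := toPair_spec _ _ i
          _ = setEmb x.1 (x.2 i) := rfl
      show toPair f _ = x
      exact Prod.ext h1' h3'
    case val =>
      have hspec : setEmb (toPair f (Finset.mem_filter.mp hf).2).1 ∘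
          (toPair f (Finset.mem_filter.mp hf).2).2 = f := by
        funext i; exact toPair_spec _ _ i
      rw [hspec]
      congr 1
      refine Finset.prod_congr rfl fun i _ => ?_
      rw [show setEmb (toPair f (Finset.mem_filter.mp hf).2).1
        ((toPair f (Finset.mem_filter.mp hf).2).2 i) = f i from toPair_spec _ _ i]
  rw [key, Fintype.sum_prod_type]
  refine Finset.sum_congr rfl fun s _ => ?_
  have hperm : ∀ σ : Equiv.Perm (Fin k),
      (C.submatrix (setEmb s ∘ σ) id).det
        = ((Equiv.Perm.sign σ : ℤ) : R) * (C.submatrix (setEmb s) id).det := by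
    intro σ
    have hsub : C.submatrix (setEmb s ∘ σ) id = (C.submatrix (setEmb s) id).submatrix σ id := by
      rw [Matrix.submatrix_submatrix]; rfl
    rw [hsub, Matrix.det_permute]
  calc ∑ σ : Equiv.Perm (Fin k),
        (∏ i, B i (setEmb s (σ i))) • (C.submatrix (setEmb s ∘ σ) id).det
      = ∑ σ : Equiv.Perm (Fin k), (((Equiv.Perm.sign σ : ℤ) : R) *
          ∏ i, (B.submatrix id (setEmb s)) i (σ i)) * (C.submatrix (setEmb s) id).det := by
        refine Finset.sum_congr rfl fun σ _ => ?_
        rw [hperm σ, smul_eq_mul]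
        simp only [Matrix.submatrix_apply, id_eq]
        ring
    _ = (∑ σ : Equiv.Perm (Fin k), ((Equiv.Perm.sign σ : ℤ) : R) *
          ∏ i, (B.submatrix id (setEmb s)) i (σ i)) * (C.submatrix (setEmb s) id).det := by
        rw [← Finset.sum_mul]
    _ = (B.submatrix id (setEmb s)).det * (C.submatrix (setEmb s) id).det := by
        congr 1
        rw [← Matrix.det_transpose (B.submatrix id (setEmb s)), Matrix.det_apply']
        refine Finset.sum_congr rfl fun σ _ => ?_
        congr 1

end CauchyBinet


lemma derivative_finset_prod {R ι : Type*} [CommRing R] [DecidableEq ι]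
    (s : Finset ι) (f : ι → Polynomial R) :
    derivative (∏ i ∈ s, f i) = ∑ i ∈ s, (∏ j ∈ s.erase i, f j) * derivative (f i) := by
  rw [Finset.prod_eq_multiset_prod, Polynomial.derivative_prod]
  rw [show (∑ i ∈ s, (∏ j ∈ s.erase i, f j) * derivative (f i))
    = (Multiset.map (fun i => (∏ j ∈ s.erase i, f j) * derivative (f i)) s.val).sum from rfl]
  congr 1

lemma derivative_det {ι : Type*} [Fintype ι] [DecidableEq ι] {R : Type*} [CommRing R]
    (M : Matrix ι ι (Polynomial R)) :
    derivative M.det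
      = ∑ i, (M.updateRow i (fun j => derivative (M i j))).det := by
  rw [Matrix.det_apply', map_sum]
  have step : ∀ σ : Equiv.Perm ι,
      derivative (((Equiv.Perm.sign σ : ℤ) : Polynomial R) * ∏ i, M (σ i) i)
      = ∑ i, ((Equiv.Perm.sign σ : ℤ) : Polynomial R) *
          ∏ k, (M.updateRow i (fun j => derivative (M i j))) (σ k) k := by
    intro σ
    rw [Polynomial.derivative_mul, Polynomial.derivative_intCast, zero_mul, zero_add,
      derivative_finset_prod, Finset.mul_sum]
    rw [← Equiv.sum_comp σ.symm (fun i => ((Equiv.Perm.sign σ : ℤ) : Polynomial R) *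
      ((∏ j ∈ univ.erase i, M (σ j) j) * derivative (M (σ i) i)))]
    refine Finset.sum_congr rfl fun i _ => ?_
    congr 1
    rw [← Finset.mul_prod_erase univ
      (fun k => (M.updateRow i (fun j => derivative (M i j))) (σ k) k)
      (Finset.mem_univ (σ.symm i))]
    rw [mul_comm]
    congr 1
    · rw [Equiv.apply_symm_apply, Matrix.updateRow_self]
    · refine Finset.prod_congr rfl fun k hk => ?_
      have hk' : σ k ≠ i := by
        intro h
        exact (Finset.mem_erase.mp hk).1 (by rw [← h, Equiv.symm_apply_apply])
      rw [Matrix.updateRow_ne hk']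
  rw [Finset.sum_congr rfl (fun σ _ => step σ), Finset.sum_comm]
  refine Finset.sum_congr rfl fun i _ => ?_
  rw [Matrix.det_apply']


section Incidence
variable {n : ℕ} (G : SimpleGraph (Fin n)) [DecidableRel G.Adj]

/-- signed incidence matrix -/
noncomputable def inc (R : Type*) [Ring R] : Matrix (Fin n) G.edgeSet R :=
  fun v e => if v = (e : Sym2 (Fin n)).out.1 then 1
    else if v = (e : Sym2 (Fin n)).out.2 then -1 else 0

lemma edge_out (e : G.edgeSet) :
    s((e : Sym2 (Fin n)).out.1, (e : Sym2 (Fin n)).out.2) = (e : Sym2 (Fin n)) :=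
  Quot.out_eq _

lemma out_ne (e : G.edgeSet) : (e : Sym2 (Fin n)).out.1 ≠ (e : Sym2 (Fin n)).out.2 := by
  have hd : ¬ (e : Sym2 (Fin n)).IsDiag := G.not_isDiag_of_mem_edgeSet e.2
  rw [← edge_out G e, Sym2.mk_isDiag_iff] at hd
  exact hd

lemma inc_apply_eq (R : Type*) [Ring R] (e : G.edgeSet) (z : Fin n) :
    inc G R z e = (if z = (e : Sym2 (Fin n)).out.1 then 1 else 0)
      - (if z = (e : Sym2 (Fin n)).out.2 then 1 else 0) := by
  unfold inc
  have := out_ne G e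
  split_ifs with h1 h2 <;> simp_all

lemma mem_edge_iff (e : G.edgeSet) (z : Fin n) :
    z ∈ (e : Sym2 (Fin n)) ↔ z = (e : Sym2 (Fin n)).out.1 ∨ z = (e : Sym2 (Fin n)).out.2 := by
  conv_lhs => rw [← edge_out G e]
  exact Sym2.mem_iff

lemma inc_mul_transpose (R : Type*) [CommRing R] :
    inc G R * (inc G R)ᵀ = G.lapMatrix R := by
  ext u v
  rw [Matrix.mul_apply]
  simp only [Matrix.transpose_apply]
  by_cases huv : u = v
  · subst huv
    have hterm : ∀ e : G.edgeSet, inc G R u e * inc G R u e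
        = if u ∈ (e : Sym2 (Fin n)) then 1 else 0 := by
      intro e
      rw [inc_apply_eq]
      simp only [mem_edge_iff]
      have := out_ne G e
      split_ifs <;> simp_all
    rw [Finset.sum_congr rfl fun e _ => hterm e, Finset.sum_boole]
    have hcard : (univ.filter fun e : G.edgeSet => u ∈ (e : Sym2 (Fin n))).card
        = G.degree u := by
      rw [← Fintype.card_subtype]
      rw [Fintype.card_congr (show {e : G.edgeSet // u ∈ (e : Sym2 (Fin n))}
        ≃ G.incidenceSet u from
        ⟨fun e => ⟨e.1.1, e.1.2, e.2⟩, fun e => ⟨⟨e.1, e.2.1⟩, e.2.2⟩,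
          fun e => rfl, fun e => rfl⟩)]
      exact G.card_incidenceSet_eq_degree u
    rw [hcard]
    simp [lapMatrix, degMatrix, Matrix.sub_apply, Matrix.diagonal_apply, adjMatrix_apply]
  · have hterm : ∀ e : G.edgeSet, inc G R u e * inc G R v e
        = if (e : Sym2 (Fin n)) = s(u, v) then (-1 : R) else 0 := by
      intro e
      have hout := out_ne G e
      have hcond : ((e : Sym2 (Fin n)) = s(u, v))
          ↔ ((e : Sym2 (Fin n)).out.1 = u ∧ (e : Sym2 (Fin n)).out.2 = v
            ∨ (e : Sym2 (Fin n)).out.1 = v ∧ (e : Sym2 (Fin n)).out.2 = u) := by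
        conv_lhs => rw [← edge_out G e]
        exact Sym2.eq_iff
      rw [inc_apply_eq, inc_apply_eq]
      simp only [hcond]
      set a := (e : Sym2 (Fin n)).out.1
      set b := (e : Sym2 (Fin n)).out.2
      by_cases h1 : u = a
      · have h2 : ¬ u = b := fun hh => hout (h1.symm.trans hh)
        by_cases h3 : v = b
        · have h4 : ¬ v = a := fun hh => hout (hh.symm.trans h3)
          rw [if_pos h1, if_neg h2, if_neg h4, if_pos h3,
            if_pos (Or.inl ⟨h1.symm, h3.symm⟩)]
          ring
        · have h4 : ¬ v = a := fun hh => huv (h1.trans hh.symm)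
          rw [if_pos h1, if_neg h2, if_neg h4, if_neg h3, if_neg]
          · ring
          · rintro (⟨-, hc⟩ | ⟨-, hc⟩)
            · exact h3 hc.symm
            · exact h2 hc.symm
      · by_cases h2 : u = b
        · by_cases h3 : v = a
          · have h4 : ¬ v = b := fun hh => hout (h3.symm.trans hh)
            rw [if_neg h1, if_pos h2, if_pos h3, if_neg h4,
              if_pos (Or.inr ⟨h3.symm, h2.symm⟩)]
            ring
          · have h4 : ¬ v = b := fun hh => huv (h2.trans hh.symm)
            rw [if_neg h1, if_pos h2, if_neg h3, if_neg h4, if_neg]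
            · ring
            · rintro (⟨hc, -⟩ | ⟨hc, -⟩)
              · exact h1 hc.symm
              · exact h3 hc.symm
        · have hc : ¬ (a = u ∧ b = v ∨ a = v ∧ b = u) := by
            rintro (⟨hc, -⟩ | ⟨-, hc⟩)
            · exact h1 hc.symm
            · exact h2 hc.symm
          rw [if_neg h1, if_neg h2, if_neg hc]
          ring
    rw [Finset.sum_congr rfl fun e _ => hterm e]
    have hsum : (∑ e : G.edgeSet, if (e : Sym2 (Fin n)) = s(u, v) then (-1 : R) else 0)
        = if G.Adj u v then (-1 : R) else 0 := by
      by_cases hadj : G.Adj u v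
      · have hmem : s(u, v) ∈ G.edgeSet := hadj
        have : ∀ e : G.edgeSet, ((e : Sym2 (Fin n)) = s(u, v)) ↔ e = ⟨s(u, v), hmem⟩ := by
          intro e; rw [Subtype.ext_iff]
        simp_rw [this]
        simp [hadj]
      · rw [Finset.sum_eq_zero, if_neg hadj]
        intro e _
        rw [if_neg]
        intro h
        exact hadj (G.mem_edgeSet.mp (h ▸ e.2))
    rw [hsum]
    simp only [lapMatrix, degMatrix, Matrix.sub_apply, Matrix.diagonal_apply, adjMatrix_apply,
      if_neg huv]
    split_ifs <;> simp_all

end Incidence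

section Minor
variable {R : Type*} [CommRing R]

instance uniqueEq {n : ℕ} (i : Fin n) : Unique {x : Fin n // x = i} :=
  ⟨⟨⟨i, rfl⟩⟩, fun a => Subtype.ext a.2⟩

lemma det_updateRow_single {n : ℕ} (M : Matrix (Fin n) (Fin n) R) (i : Fin n) :
    (M.updateRow i (Pi.single i 1)).det
      = (M.submatrix (Subtype.val : {x : Fin n // x ≠ i} → Fin n) Subtype.val).det := by
  classical
  set N := M.updateRow i (Pi.single i 1) with hN
  have he : N.det = (N.submatrix (Equiv.sumCompl (· = i)) (Equiv.sumCompl (· = i))).det :=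
    (Matrix.det_submatrix_equiv_self _ _).symm
  rw [he]
  set N' := N.submatrix (Equiv.sumCompl (· = i)) (Equiv.sumCompl (· = i)) with hN'
  have hb12 : N'.toBlocks₁₂ = 0 := by
    ext u v
    simp only [Matrix.toBlocks₁₂, Matrix.of_apply, Matrix.zero_apply]
    show N ((Equiv.sumCompl (· = i)) (Sum.inl u)) ((Equiv.sumCompl (· = i)) (Sum.inr v)) = 0
    rw [Equiv.sumCompl_apply_inl, Equiv.sumCompl_apply_inr, hN]
    have hu : (u : Fin n) = i := u.2
    rw [hu, Matrix.updateRow_self]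
    exact Pi.single_eq_of_ne v.2 1
  have hblocks : N' = Matrix.fromBlocks N'.toBlocks₁₁ 0 N'.toBlocks₂₁ N'.toBlocks₂₂ := by
    rw [← hb12, Matrix.fromBlocks_toBlocks N']
  rw [hblocks, Matrix.det_fromBlocks_zero₁₂]
  have h11 : N'.toBlocks₁₁.det = 1 := by
    rw [Matrix.det_unique]
    show N ((Equiv.sumCompl (· = i)) (Sum.inl (default : {x : Fin n // x = i})))
      ((Equiv.sumCompl (· = i)) (Sum.inl (default : {x : Fin n // x = i}))) = 1
    rw [Equiv.sumCompl_apply_inl, hN]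
    have hd : ((default : {x : Fin n // x = i}) : Fin n) = i := (default : {x : Fin n // x = i}).2
    rw [hd, Matrix.updateRow_self]
    exact Pi.single_eq_same i 1
  have h22 : N'.toBlocks₂₂ = M.submatrix (Subtype.val : {x : Fin n // x ≠ i} → Fin n)
      Subtype.val := by
    ext u v
    simp only [Matrix.toBlocks₂₂, Matrix.of_apply, Matrix.submatrix_apply]
    show N ((Equiv.sumCompl (· = i)) (Sum.inr u)) ((Equiv.sumCompl (· = i)) (Sum.inr v)) = _
    rw [Equiv.sumCompl_apply_inr, Equiv.sumCompl_apply_inr, hN, Matrix.updateRow_ne u.2]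
  rw [h11, h22, one_mul]

end Minor

section MatrixTree
variable {n : ℕ} (G : SimpleGraph (Fin n)) [DecidableRel G.Adj] (i : Fin n)

noncomputable def eVr : {x : Fin n // x ≠ i} ≃ Fin (Fintype.card {x : Fin n // x ≠ i}) :=
  Fintype.equivFin _

noncomputable def eEr : ↥G.edgeSet ≃ Fin (Fintype.card ↥G.edgeSet) :=
  Fintype.equivFin _

noncomputable def Bmat (R : Type*) [Ring R] :
    Matrix (Fin (Fintype.card {x : Fin n // x ≠ i})) (Fin (Fintype.card ↥G.edgeSet)) R :=
  ((inc G R).submatrix (Subtype.val : {x : Fin n // x ≠ i} → Fin n) id).submatrix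
    (eVr i).symm (eEr G).symm

/-- the square submatrix of the reduced incidence matrix given by a subset of columns -/
noncomputable def Bs (R : Type*) [Ring R]
    (s : {s : Finset (Fin (Fintype.card ↥G.edgeSet)) //
      s.card = Fintype.card {x : Fin n // x ≠ i}}) :
    Matrix (Fin (Fintype.card {x : Fin n // x ≠ i}))
      (Fin (Fintype.card {x : Fin n // x ≠ i})) R :=
  (Bmat G i R).submatrix id (setEmb s)

noncomputable def edgeOf
    (s : {s : Finset (Fin (Fintype.card ↥G.edgeSet)) //
      s.card = Fintype.card {x : Fin n // x ≠ i}})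
    (j : Fin (Fintype.card {x : Fin n // x ≠ i})) : ↥G.edgeSet :=
  (eEr G).symm (setEmb s j)

noncomputable def Hs
    (s : {s : Finset (Fin (Fintype.card ↥G.edgeSet)) //
      s.card = Fintype.card {x : Fin n // x ≠ i}}) : SimpleGraph (Fin n) :=
  SimpleGraph.fromEdgeSet (Set.range fun j => ((edgeOf G i s j : ↥G.edgeSet) : Sym2 (Fin n)))

variable {G i}

lemma Bs_apply (R : Type*) [Ring R] (s) (a) (j) :
    Bs G i R s a j = inc G R (((eVr i).symm a : {x : Fin n // x ≠ i}) : Fin n) (edgeOf G i s j) :=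
  rfl

lemma edgeOf_injective (s) : Function.Injective (edgeOf G i s) := by
  intro a b h
  exact setEmb_injective s ((eEr G).symm.injective h)

lemma Bs_map (R : Type*) [Ring R] (s) :
    (Bs G i ℤ s).map (Int.cast : ℤ → R) = Bs G i R s := by
  ext a j
  simp only [Matrix.map_apply, Bs_apply]
  unfold inc
  split_ifs <;> simp

lemma Hs_le (s) : Hs G i s ≤ G := by
  intro u v h
  obtain ⟨hmem, -⟩ := (SimpleGraph.fromEdgeSet_adj _).mp h
  obtain ⟨j, hj⟩ := hmem
  exact G.mem_edgeSet.mp (hj ▸ (edgeOf G i s j).2)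

/-- vecMul of the reduced incidence submatrix computes differences of an extension by 0. -/
lemma colSum (R : Type*) [CommRing R] (xt : Fin n → R) (e : ↥G.edgeSet) :
    ∑ v : Fin n, xt v * inc G R v e
      = xt (e : Sym2 (Fin n)).out.1 - xt (e : Sym2 (Fin n)).out.2 := by
  simp only [inc_apply_eq, mul_sub, mul_ite, mul_one, mul_zero]
  rw [Finset.sum_sub_distrib, Finset.sum_ite_eq' univ, Finset.sum_ite_eq' univ]
  simp

noncomputable def extRoot {R : Type*} [CommRing R]
    (x : Fin (Fintype.card {x : Fin n // x ≠ i}) → R) : Fin n → R :=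
  fun v => if h : v = i then 0 else x (eVr i ⟨v, h⟩)

lemma extRoot_root {R : Type*} [CommRing R] (x : Fin (Fintype.card {x : Fin n // x ≠ i}) → R) :
    extRoot x i = 0 := dif_pos rfl

lemma extRoot_apply {R : Type*} [CommRing R] (x) (a : Fin (Fintype.card {x : Fin n // x ≠ i})) :
    extRoot (i := i) (R := R) x (((eVr i).symm a : {x : Fin n // x ≠ i}) : Fin n) = x a := by
  unfold extRoot
  rw [dif_neg ((eVr i).symm a).2]
  congr 1
  rw [show (⟨(((eVr i).symm a : {x : Fin n // x ≠ i}) : Fin n), ((eVr i).symm a).2⟩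
    : {x : Fin n // x ≠ i}) = (eVr i).symm a from Subtype.ext rfl]
  simp

lemma vecMul_Bs (R : Type*) [CommRing R] (x) (s) (j) :
    Matrix.vecMul x (Bs G i R s) j
      = extRoot (i := i) x ((edgeOf G i s j : Sym2 (Fin n)).out.1)
        - extRoot (i := i) x ((edgeOf G i s j : Sym2 (Fin n)).out.2) := by
  rw [← colSum R (extRoot (i := i) x) (edgeOf G i s j)]
  rw [Matrix.vecMul, dotProduct]
  rw [show ∑ v : Fin n, extRoot (i := i) x v * inc G R v (edgeOf G i s j)
    = extRoot (i := i) x i * inc G R i (edgeOf G i s j)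
      + ∑ v ∈ univ.erase i, extRoot (i := i) x v * inc G R v (edgeOf G i s j) from
    (Finset.add_sum_erase univ _ (Finset.mem_univ i)).symm]
  rw [extRoot_root, zero_mul, zero_add]
  rw [Finset.sum_subtype (p := fun v => v ≠ i) (univ.erase i) (fun z => by simp)
    (fun v => extRoot (i := i) x v * inc G R v (edgeOf G i s j))]
  rw [← Equiv.sum_comp (eVr i).symm
    (fun u : {x : Fin n // x ≠ i} => extRoot (i := i) x (u : Fin n)
      * inc G R (u : Fin n) (edgeOf G i s j))]
  refine Finset.sum_congr rfl fun a _ => ?_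
  rw [extRoot_apply, Bs_apply]

lemma reach_const {R : Type*} [CommRing R] (s) (xt : Fin n → R)
    (hedge : ∀ j, xt ((edgeOf G i s j : Sym2 (Fin n)).out.1)
      = xt ((edgeOf G i s j : Sym2 (Fin n)).out.2)) :
    ∀ {u v : Fin n}, (Hs G i s).Reachable u v → xt u = xt v := by
  intro u v huv
  obtain ⟨w⟩ := huv
  induction w with
  | nil => rfl
  | cons h p ih =>
    refine Eq.trans ?_ ih
    obtain ⟨hmem, hne⟩ := (SimpleGraph.fromEdgeSet_adj _).mp h
    obtain ⟨j, hj⟩ := hmem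
    have hj' : s((edgeOf G i s j : Sym2 (Fin n)).out.1, (edgeOf G i s j : Sym2 (Fin n)).out.2)
        = s(_, _) := (edge_out G (edgeOf G i s j)).trans hj
    rcases Sym2.eq_iff.mp hj' with ⟨h1, h2⟩ | ⟨h1, h2⟩
    · rw [← h1, ← h2]; exact hedge j
    · rw [← h1, ← h2]; exact (hedge j).symm

lemma det_Bs_ne_zero {F : Type*} [Field F] (s) (hpre : (Hs G i s).Preconnected) :
    (Bs G i F s).det ≠ 0 := by
  intro hdet
  rw [← Matrix.det_transpose] at hdet
  obtain ⟨x, hx, hmul⟩ := (Matrix.exists_mulVec_eq_zero_iff).mpr hdet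
  have hvm : Matrix.vecMul x (Bs G i F s) = 0 := by
    rw [← Matrix.mulVec_transpose]; exact hmul
  have hedge : ∀ j, extRoot (i := i) x ((edgeOf G i s j : Sym2 (Fin n)).out.1)
      = extRoot (i := i) x ((edgeOf G i s j : Sym2 (Fin n)).out.2) := by
    intro j
    have := congrFun hvm j
    rw [vecMul_Bs] at this
    have := sub_eq_zero.mp this
    exact this
  have hall : ∀ v, extRoot (i := i) x v = 0 := by
    intro v
    rw [← extRoot_root (i := i) x]
    exact (reach_const s _ hedge (hpre i v)).symm
  apply hx
  funext a
  rw [← extRoot_apply (i := i) x a, hall]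
  rfl

lemma det_Bs_eq_zero_of_not_preconnected (s) (hpre : ¬ (Hs G i s).Preconnected) :
    (Bs G i ℂ s).det = 0 := by
  classical
  rw [← Matrix.det_transpose]
  rw [← Matrix.exists_mulVec_eq_zero_iff]
  unfold SimpleGraph.Preconnected at hpre
  push_neg at hpre
  obtain ⟨u, w, hnr⟩ := hpre
  set c := if (Hs G i s).Reachable i u then w else u with hc
  have hic : ¬ (Hs G i s).Reachable i c := by
    rw [hc]
    split_ifs with h
    · exact fun hw => hnr (h.symm.trans hw)
    · exact h
  have hci : c ≠ i := fun h => hic (by rw [h])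
  set xt : Fin n → ℂ := fun v => if (Hs G i s).Reachable c v then 1 else 0 with hxt
  set x : Fin (Fintype.card {x : Fin n // x ≠ i}) → ℂ := fun a => xt ((eVr i).symm a : Fin n)
    with hx
  have hext : extRoot (i := i) x = xt := by
    funext v
    unfold extRoot
    split_ifs with h
    · rw [hxt]
      simp only []
      rw [if_neg (fun hr => hic ((h ▸ hr).symm))]
    · rw [hx]
      simp only []
      congr 2
      simp
  refine ⟨x, ?_, ?_⟩
  · intro h0
    have : x (eVr i ⟨c, hci⟩) = 0 := by rw [h0]; rfl
    rw [hx] at this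
    simp only [Equiv.symm_apply_apply] at this
    rw [hxt] at this
    simp only [if_pos (SimpleGraph.Reachable.refl c)] at this
    exact one_ne_zero this
  · rw [Matrix.mulVec_transpose]
    funext j
    rw [vecMul_Bs, hext]
    show xt _ - xt _ = 0
    rw [sub_eq_zero]
    -- the two endpoints are adjacent in Hs
    have hadj : (Hs G i s).Adj ((edgeOf G i s j : Sym2 (Fin n)).out.1)
        ((edgeOf G i s j : Sym2 (Fin n)).out.2) := by
      unfold Hs
      rw [SimpleGraph.fromEdgeSet_adj]
      exact ⟨⟨j, (edge_out G _).symm⟩, out_ne G _⟩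
    rw [hxt]
    simp only []
    by_cases hr : (Hs G i s).Reachable c ((edgeOf G i s j : Sym2 (Fin n)).out.1)
    · rw [if_pos hr, if_pos (hr.trans hadj.reachable)]
    · rw [if_neg hr, if_neg (fun h => hr (h.trans hadj.symm.reachable))]

end MatrixTree

section Cycle
variable {n : ℕ} {G : SimpleGraph (Fin n)} [DecidableRel G.Adj] {i : Fin n}

noncomputable def dartCoeff (s) (d : (Hs G i s).Dart)
    (j : Fin (Fintype.card {x : Fin n // x ≠ i})) : ℂ :=
  if ((edgeOf G i s j : Sym2 (Fin n))) = d.edge then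
    (if d.toProd.1 = (edgeOf G i s j : Sym2 (Fin n)).out.1 then 1 else -1) else 0

noncomputable def walkCoeff (s) {u v : Fin n} (w : (Hs G i s).Walk u v) :
    Fin (Fintype.card {x : Fin n // x ≠ i}) → ℂ :=
  (w.darts.map (dartCoeff s)).sum

lemma list_sum_apply {α β : Type*} [AddCommMonoid β] (j : α) (l : List (α → β)) :
    l.sum j = (l.map (fun f => f j)).sum := by
  induction l with
  | nil => rfl
  | cons f l ih => simp [List.sum_cons, ih]

lemma dart_combo (s) (d : (Hs G i s).Dart) (j₀ : Fin (Fintype.card {x : Fin n // x ≠ i}))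
    (hj₀ : (edgeOf G i s j₀ : Sym2 (Fin n)) = d.edge) (z : Fin n) :
    ∑ j, dartCoeff s d j * inc G ℂ z (edgeOf G i s j)
      = (if z = d.toProd.1 then 1 else 0) - (if z = d.toProd.2 then 1 else 0) := by
  have huniq : ∀ j, ((edgeOf G i s j : Sym2 (Fin n)) = d.edge) ↔ j = j₀ := by
    intro j
    constructor
    · intro h
      exact edgeOf_injective s (Subtype.val_injective (h.trans hj₀.symm))
    · rintro rfl; exact hj₀
  have hred : ∀ j, dartCoeff s d j * inc G ℂ z (edgeOf G i s j)
      = if j = j₀ then dartCoeff s d j₀ * inc G ℂ z (edgeOf G i s j₀) else 0 := by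
    intro j
    by_cases h : j = j₀
    · subst h; rw [if_pos rfl]
    · rw [if_neg h]
      unfold dartCoeff
      rw [if_neg (fun hc => h ((huniq j).mp hc)), zero_mul]
  rw [Finset.sum_congr rfl (fun j _ => hred j), Finset.sum_ite_eq' univ,
    if_pos (Finset.mem_univ j₀)]
  have hd : d.edge = s(d.toProd.1, d.toProd.2) := rfl
  have hsplit : s((edgeOf G i s j₀ : Sym2 (Fin n)).out.1, (edgeOf G i s j₀ : Sym2 (Fin n)).out.2)
      = s(d.toProd.1, d.toProd.2) := (edge_out G _).trans (hj₀.trans hd)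
  have hne : d.toProd.1 ≠ d.toProd.2 := d.adj.ne
  rw [inc_apply_eq]
  unfold dartCoeff
  rw [if_pos hj₀]
  rcases Sym2.eq_iff.mp hsplit with ⟨h1, h2⟩ | ⟨h1, h2⟩
  · rw [if_pos h1.symm, h1, h2]
    ring
  · rw [if_neg (fun hc => hne (hc.trans h1)), h1, h2]
    ring

lemma walk_combo (s) {u v : Fin n} (w : (Hs G i s).Walk u v) (z : Fin n) :
    ∑ j, walkCoeff s w j * inc G ℂ z (edgeOf G i s j)
      = (if z = u then 1 else 0) - (if z = v then 1 else 0) := by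
  induction w with
  | nil => simp [walkCoeff]
  | @cons u u' v h p ih =>
    have hw : walkCoeff s (SimpleGraph.Walk.cons h p)
        = dartCoeff s ⟨(u, u'), h⟩ + walkCoeff s p := by
      unfold walkCoeff
      rw [SimpleGraph.Walk.darts_cons, List.map_cons, List.sum_cons]
    obtain ⟨j₀, hj₀⟩ : ∃ j₀, (edgeOf G i s j₀ : Sym2 (Fin n))
        = (⟨(u, u'), h⟩ : (Hs G i s).Dart).edge := by
      obtain ⟨hmem, -⟩ := (SimpleGraph.fromEdgeSet_adj _).mp h
      obtain ⟨j₀, hj₀⟩ := hmem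
      exact ⟨j₀, hj₀⟩
    rw [hw]
    simp only [Pi.add_apply, add_mul]
    rw [Finset.sum_add_distrib, ih, dart_combo s _ j₀ hj₀ z]
    ring

lemma det_Bs_eq_zero_of_cycle (s) {a : Fin n} (c : (Hs G i s).Walk a a) (hc : c.IsCycle) :
    (Bs G i ℂ s).det = 0 := by
  rw [← Matrix.exists_mulVec_eq_zero_iff]
  cases c with
  | nil => exact absurd rfl hc.ne_nil
  | @cons _ u' _ hadj p =>
    obtain ⟨j₀, hj₀⟩ : ∃ j₀, (edgeOf G i s j₀ : Sym2 (Fin n))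
        = (⟨(a, u'), hadj⟩ : (Hs G i s).Dart).edge := by
      obtain ⟨hmem, -⟩ := (SimpleGraph.fromEdgeSet_adj _).mp hadj
      obtain ⟨j₀, hj₀⟩ := hmem
      exact ⟨j₀, hj₀⟩
    refine ⟨walkCoeff s (SimpleGraph.Walk.cons hadj p), ?_, ?_⟩
    · intro h0
      have hval : walkCoeff s (SimpleGraph.Walk.cons hadj p) j₀ = 0 := by rw [h0]; rfl
      have hexp : walkCoeff s (SimpleGraph.Walk.cons hadj p) j₀
          = dartCoeff s ⟨(a, u'), hadj⟩ j₀ := by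
        unfold walkCoeff
        rw [SimpleGraph.Walk.darts_cons, List.map_cons, List.sum_cons]
        rw [Pi.add_apply, list_sum_apply]
        rw [show (((p.darts.map (dartCoeff s)).map (fun f => f j₀)).sum : ℂ) = 0 from ?_,
          add_zero]
        apply List.sum_eq_zero
        intro x hx
        obtain ⟨f, hf, rfl⟩ := List.mem_map.mp hx
        obtain ⟨d, hd, rfl⟩ := List.mem_map.mp hf
        have hdedge : d.edge ∈ p.edges := List.mem_map_of_mem (f := SimpleGraph.Dart.edge) hd
        have hnodup := hc.edges_nodup
        rw [SimpleGraph.Walk.edges_cons] at hnodup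
        have hnotmem := (List.nodup_cons.mp hnodup).1
        unfold dartCoeff
        rw [if_neg]
        intro hcond
        apply hnotmem
        rw [show (s(a, u') : Sym2 (Fin n)) = d.edge from hj₀.symm.trans hcond]
        exact hdedge
      rw [hexp] at hval
      unfold dartCoeff at hval
      rw [if_pos hj₀] at hval
      split_ifs at hval <;> norm_num at hval
    · funext row
      show ∑ j, Bs G i ℂ s row j * walkCoeff s (SimpleGraph.Walk.cons hadj p) j = 0
      rw [Finset.sum_congr rfl (fun j _ => by
        rw [Bs_apply, mul_comm] :
        ∀ j ∈ univ, Bs G i ℂ s row j * walkCoeff s (SimpleGraph.Walk.cons hadj p) j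
          = walkCoeff s (SimpleGraph.Walk.cons hadj p) j
            * inc G ℂ (((eVr i).symm row : {x : Fin n // x ≠ i}) : Fin n) (edgeOf G i s j))]
      rw [walk_combo]
      exact sub_self _

end Cycle

section Classify
variable {n : ℕ} {G : SimpleGraph (Fin n)} [DecidableRel G.Adj] {i : Fin n}

lemma det_Bs_int_cast (R : Type*) [CommRing R] (s) :
    (((Bs G i ℤ s).det : ℤ) : R) = (Bs G i R s).det := by
  rw [show (((Bs G i ℤ s).det : ℤ) : R) = (Int.castRingHom R) ((Bs G i ℤ s).det) from rfl,
    RingHom.map_det]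
  exact congrArg Matrix.det (Bs_map R s)

lemma det_sq_one (s) (hpre : (Hs G i s).Preconnected) :
    (Bs G i ℂ s).det * (Bs G i ℂ s).det = 1 := by
  set d := (Bs G i ℤ s).det with hd
  have hnd : ∀ p : ℕ, p.Prime → ¬ ((p : ℤ) ∣ d) := by
    intro p hp hdvd
    haveI := Fact.mk hp
    have h0 : ((d : ℤ) : ZMod p) = 0 := (ZMod.intCast_zmod_eq_zero_iff_dvd d p).mpr hdvd
    rw [det_Bs_int_cast (ZMod p) s] at h0
    exact det_Bs_ne_zero s hpre h0
  have habs : d.natAbs = 1 := by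
    by_contra hne
    obtain ⟨p, hp, hdvd⟩ := Nat.exists_prime_and_dvd hne
    exact hnd p hp (dvd_trans (Int.natCast_dvd_natCast.mpr hdvd)
      (Int.natAbs_dvd.mpr (dvd_refl d)))
  have hsq : d * d = 1 := by
    rcases Int.natAbs_eq_iff.mp habs with h | h <;> rw [h] <;> norm_num
  calc (Bs G i ℂ s).det * (Bs G i ℂ s).det
      = ((d : ℤ) : ℂ) * ((d : ℤ) : ℂ) := by rw [det_Bs_int_cast ℂ s]
    _ = ((d * d : ℤ) : ℂ) := by push_cast; ring
    _ = 1 := by rw [hsq]; norm_num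

lemma isTree_of_preconnected (s) (hpre : (Hs G i s).Preconnected) :
    (Hs G i s).IsTree := by
  rw [SimpleGraph.isTree_iff]
  refine ⟨(SimpleGraph.connected_iff _).mpr ⟨hpre, ⟨i⟩⟩, ?_⟩
  intro v c hc
  have h1 := det_sq_one s hpre
  rw [det_Bs_eq_zero_of_cycle s c hc, mul_zero] at h1
  exact one_ne_zero h1.symm

lemma Hs_edgeSet (s) : (Hs G i s).edgeSet
    = Set.range (fun j => ((edgeOf G i s j : ↥G.edgeSet) : Sym2 (Fin n))) := by
  unfold Hs
  rw [SimpleGraph.edgeSet_fromEdgeSet]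
  ext e
  simp only [Set.mem_diff, Set.mem_setOf_eq]
  constructor
  · exact fun h => h.1
  · intro h
    refine ⟨h, ?_⟩
    obtain ⟨j, rfl⟩ := h
    exact G.not_isDiag_of_mem_edgeSet (edgeOf G i s j).2

lemma mem_s_iff (s) (a : Fin (Fintype.card ↥G.edgeSet)) :
    a ∈ s.1 ↔ (((eEr G).symm a : ↥G.edgeSet) : Sym2 (Fin n))
      ∈ Set.range (fun j => ((edgeOf G i s j : ↥G.edgeSet) : Sym2 (Fin n))) := by
  constructor
  · intro ha
    obtain ⟨j, hj⟩ := exists_setEmb_eq s ha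
    exact ⟨j, congrArg (fun z => ((((eEr G).symm z) : ↥G.edgeSet) : Sym2 (Fin n))) hj⟩
  · rintro ⟨j, hj⟩
    have : edgeOf G i s j = (eEr G).symm a := Subtype.val_injective hj
    have h2 : setEmb s j = a := by
      have := congrArg (eEr G) this
      unfold edgeOf at this
      simpa using this
    rw [← h2]
    exact setEmb_mem s j

set_option maxHeartbeats 1000000 in
theorem lap_minor_det (G : SimpleGraph (Fin n)) [DecidableRel G.Adj] (i : Fin n) :
    ((G.lapMatrix ℂ).submatrix (Subtype.val : {x : Fin n // x ≠ i} → Fin n) Subtype.val).det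
      = (numSpanningTrees G : ℂ) := by
  classical
  have hfact : (Bmat G i ℂ) * (Bmat G i ℂ)ᵀ
      = ((G.lapMatrix ℂ).submatrix (Subtype.val : {x : Fin n // x ≠ i} → Fin n)
          Subtype.val).submatrix (eVr i).symm (eVr i).symm := by
    ext a b
    rw [Matrix.mul_apply]
    calc ∑ j, Bmat G i ℂ a j * (Bmat G i ℂ)ᵀ j b
        = ∑ e : ↥G.edgeSet, inc G ℂ (((eVr i).symm a : {x : Fin n // x ≠ i}) : Fin n) e
            * inc G ℂ (((eVr i).symm b : {x : Fin n // x ≠ i}) : Fin n) e := by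
          rw [← Equiv.sum_comp (eEr G).symm
            (fun e => inc G ℂ (((eVr i).symm a : {x : Fin n // x ≠ i}) : Fin n) e
              * inc G ℂ (((eVr i).symm b : {x : Fin n // x ≠ i}) : Fin n) e)]
          refine Finset.sum_congr rfl fun j _ => ?_
          simp [Bmat, Matrix.submatrix_apply, Matrix.transpose_apply]
      _ = (inc G ℂ * (inc G ℂ)ᵀ) (((eVr i).symm a : {x : Fin n // x ≠ i}) : Fin n)
            (((eVr i).symm b : {x : Fin n // x ≠ i}) : Fin n) := by
          rw [Matrix.mul_apply]
          refine Finset.sum_congr rfl fun e _ => ?_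
          rw [Matrix.transpose_apply]
      _ = _ := by rw [inc_mul_transpose]; rfl
  have hdet1 : ((G.lapMatrix ℂ).submatrix
      (Subtype.val : {x : Fin n // x ≠ i} → Fin n) Subtype.val).det
      = ((Bmat G i ℂ) * (Bmat G i ℂ)ᵀ).det := by
    rw [hfact, Matrix.det_submatrix_equiv_self]
  rw [hdet1, cauchy_binet]
  have hterm : ∀ s, ((Bmat G i ℂ).submatrix id (setEmb s)).det
      * ((Bmat G i ℂ)ᵀ.submatrix (setEmb s) id).det
      = if (Hs G i s).Preconnected then (1 : ℂ) else 0 := by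
    intro s
    have ht : ((Bmat G i ℂ)ᵀ.submatrix (setEmb s) id)
        = ((Bmat G i ℂ).submatrix id (setEmb s))ᵀ := by
      rw [Matrix.transpose_submatrix]
    rw [ht, Matrix.det_transpose]
    show (Bs G i ℂ s).det * (Bs G i ℂ s).det = _
    by_cases hpre : (Hs G i s).Preconnected
    · rw [if_pos hpre]; exact det_sq_one s hpre
    · rw [if_neg hpre, det_Bs_eq_zero_of_not_preconnected s hpre, mul_zero]
  rw [Finset.sum_congr rfl (fun s _ => hterm s), Finset.sum_boole]
  congr 1
  rw [← Fintype.card_subtype]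
  rw [show numSpanningTrees G = Nat.card {s : {s : Finset (Fin (Fintype.card ↥G.edgeSet)) //
      s.card = Fintype.card {x : Fin n // x ≠ i}} // (Hs G i s).Preconnected} from ?_,
    Nat.card_eq_fintype_card]
  unfold numSpanningTrees
  refine (Nat.card_congr (Equiv.ofBijective
    (fun s => ⟨Hs G i s.1, Hs_le s.1, isTree_of_preconnected s.1 s.2⟩) ⟨?_, ?_⟩)).symm
  · -- injective
    rintro ⟨s₁, h₁⟩ ⟨s₂, h₂⟩ hEq
    have hgraph : Hs G i s₁ = Hs G i s₂ := congrArg Subtype.val hEq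
    have hrange := congrArg SimpleGraph.edgeSet hgraph
    rw [Hs_edgeSet, Hs_edgeSet] at hrange
    apply Subtype.ext
    apply Subtype.ext
    ext a
    rw [mem_s_iff s₁ a, mem_s_iff s₂ a, hrange]
  · -- surjective
    rintro ⟨T, hle, htree⟩
    letI : Fintype ↥T.edgeSet := Fintype.ofFinite _
    have hsub : T.edgeSet ⊆ G.edgeSet := SimpleGraph.edgeSet_mono hle
    set f : ↥T.edgeSet → Fin (Fintype.card ↥G.edgeSet) :=
      fun e => eEr G ⟨e.1, hsub e.2⟩ with hf
    have hfinj : Function.Injective f := by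
      intro e₁ e₂ h
      have h2 := (eEr G).injective h
      exact Subtype.ext (congrArg (Subtype.val : ↥G.edgeSet → Sym2 (Fin n)) h2)
    have hn1 : Fintype.card {x : Fin n // x ≠ i} = n - 1 := by
      have hcc := Fintype.card_subtype_compl (fun x : Fin n => x = i)
      rw [Fintype.card_subtype_eq, Fintype.card_fin] at hcc
      exact hcc
    have hTcard : Fintype.card ↥T.edgeSet + 1 = n := by
      have := htree.card_edgeFinset
      rwa [SimpleGraph.edgeFinset, Set.toFinset_card, Fintype.card_fin] at this
    have hcard : (Finset.image f univ).card = Fintype.card {x : Fin n // x ≠ i} := by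
      rw [Finset.card_image_of_injective _ hfinj, Finset.card_univ, hn1]
      omega
    set s₀ : {s : Finset (Fin (Fintype.card ↥G.edgeSet)) //
        s.card = Fintype.card {x : Fin n // x ≠ i}} := ⟨Finset.image f univ, hcard⟩ with hs₀
    have hrange : Set.range (fun j => ((edgeOf G i s₀ j : ↥G.edgeSet) : Sym2 (Fin n)))
        = T.edgeSet := by
      ext e
      constructor
      · rintro ⟨j, rfl⟩
        show ((edgeOf G i s₀ j : ↥G.edgeSet) : Sym2 (Fin n)) ∈ T.edgeSet
        have hmem : setEmb s₀ j ∈ s₀.1 := setEmb_mem s₀ j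
        rw [hs₀] at hmem
        obtain ⟨e', -, hfe⟩ := Finset.mem_image.mp hmem
        have : edgeOf G i s₀ j = ⟨e'.1, hsub e'.2⟩ := by
          unfold edgeOf
          rw [← hfe]
          simp [hf]
        rw [this]
        exact e'.2
      · intro he
        have hmem : f ⟨e, he⟩ ∈ s₀.1 := Finset.mem_image_of_mem f (Finset.mem_univ _)
        obtain ⟨j, hj⟩ := exists_setEmb_eq s₀ hmem
        refine ⟨j, ?_⟩
        show ((edgeOf G i s₀ j : ↥G.edgeSet) : Sym2 (Fin n)) = e
        have : edgeOf G i s₀ j = ⟨e, hsub he⟩ := by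
          unfold edgeOf
          rw [hj, hf]
          simp
        rw [this]
    have hHs : Hs G i s₀ = T := by
      unfold Hs
      rw [hrange, SimpleGraph.fromEdgeSet_edgeSet]
    refine ⟨⟨s₀, ?_⟩, ?_⟩
    · rw [hHs]
      exact htree.isConnected.preconnected
    · apply Subtype.ext
      exact hHs

end Classify

section Final
variable {n : ℕ} (G : SimpleGraph (Fin n)) [DecidableRel G.Adj]

noncomputable def Mpoly : Matrix (Fin n) (Fin n) (Polynomial ℂ) :=
  1 - (X : Polynomial ℂ) • G.adjMatrix (Polynomial ℂ)
    + (X : Polynomial ℂ) ^ 2 • (Matrix.diagonal (fun i => (G.degree i : Polynomial ℂ)) - 1)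

noncomputable def Ppoly : Polynomial ℂ := (Mpoly G).det

lemma Mpoly_apply (i j : Fin n) : Mpoly G i j
    = (if i = j then 1 else 0) - X * (if G.Adj i j then 1 else 0)
      + X ^ 2 * ((if i = j then (G.degree i : Polynomial ℂ) else 0)
        - (if i = j then 1 else 0)) := by
  simp only [Mpoly, Matrix.add_apply, Matrix.sub_apply, Matrix.smul_apply, Matrix.one_apply,
    SimpleGraph.adjMatrix_apply, Matrix.diagonal_apply, smul_eq_mul]

lemma Ppoly_eval (t : ℂ) : (Ppoly G).eval t
    = Matrix.det ((1 : Matrix (Fin n) (Fin n) ℂ) - t • G.adjMatrix ℂ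
        + t ^ 2 • (Matrix.diagonal (fun i => (G.degree i : ℂ)) - 1)) := by
  rw [show (Ppoly G).eval t = (Polynomial.evalRingHom t) (Mpoly G).det from rfl,
    RingHom.map_det]
  congr 1
  ext i j
  rw [RingHom.mapMatrix_apply, Matrix.map_apply, Mpoly_apply]
  simp only [Polynomial.coe_evalRingHom, Polynomial.eval_add, Polynomial.eval_sub,
    Polynomial.eval_mul, Polynomial.eval_pow, Polynomial.eval_X, apply_ite (Polynomial.eval t),
    Polynomial.eval_one, Polynomial.eval_zero, Polynomial.eval_natCast]
  simp only [Matrix.add_apply, Matrix.sub_apply, Matrix.smul_apply, Matrix.one_apply,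
    SimpleGraph.adjMatrix_apply, Matrix.diagonal_apply, smul_eq_mul]

lemma Mpoly_eval_one : (Mpoly G).map (Polynomial.eval 1) = G.lapMatrix ℂ := by
  ext i j
  rw [Matrix.map_apply, Mpoly_apply]
  simp only [Polynomial.eval_add, Polynomial.eval_sub, Polynomial.eval_mul, Polynomial.eval_pow,
    Polynomial.eval_X, apply_ite (Polynomial.eval (1 : ℂ)), Polynomial.eval_one,
    Polynomial.eval_zero, Polynomial.eval_natCast]
  simp only [lapMatrix, degMatrix, Matrix.sub_apply, Matrix.diagonal_apply,
    SimpleGraph.adjMatrix_apply]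
  split_ifs <;> ring

lemma lap_det_zero [Nonempty (Fin n)] : (G.lapMatrix ℂ).det = 0 := by
  apply Matrix.exists_mulVec_eq_zero_iff.mp
  refine ⟨fun _ => 1, ?_, G.lapMatrix_mulVec_const_eq_zero⟩
  intro h
  exact one_ne_zero (congrFun h (Classical.arbitrary (Fin n)))

lemma Ppoly_eval_one [Nonempty (Fin n)] : (Ppoly G).eval 1 = 0 := by
  rw [show (Ppoly G).eval 1 = (Polynomial.evalRingHom 1) (Mpoly G).det from rfl,
    RingHom.map_det]
  rw [show (Polynomial.evalRingHom 1).mapMatrix (Mpoly G) = (Mpoly G).map (Polynomial.eval 1)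
    from rfl]
  rw [Mpoly_eval_one, lap_det_zero]

lemma Mpoly_deriv_eval_one (i j : Fin n) :
    Polynomial.eval 1 (Polynomial.derivative (Mpoly G i j))
      = G.lapMatrix ℂ i j + (if i = j then (G.degree i : ℂ) - 2 else 0) := by
  rw [Mpoly_apply]
  simp only [lapMatrix, degMatrix, Matrix.sub_apply, Matrix.diagonal_apply,
    SimpleGraph.adjMatrix_apply]
  split_ifs <;>
    simp [Polynomial.derivative_sub, Polynomial.derivative_add, Polynomial.derivative_mul,
      apply_ite (Polynomial.eval (1 : ℂ))] <;>
    ring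

lemma Ppoly_deriv_eval_one [Nonempty (Fin n)] :
    (Polynomial.derivative (Ppoly G)).eval 1
      = (∑ i, ((G.degree i : ℂ) - 2)) * (numSpanningTrees G : ℂ) := by
  rw [show Ppoly G = (Mpoly G).det from rfl, derivative_det]
  rw [show Polynomial.eval 1 = (Polynomial.evalRingHom 1 : Polynomial ℂ →+* ℂ) from rfl]
  rw [map_sum]
  have hterm : ∀ i, (Polynomial.evalRingHom 1)
      ((Mpoly G).updateRow i (fun j => Polynomial.derivative (Mpoly G i j))).det
      = ((G.degree i : ℂ) - 2) * (numSpanningTrees G : ℂ) := by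
    intro i
    rw [RingHom.map_det]
    rw [show ((Polynomial.evalRingHom 1).mapMatrix
        ((Mpoly G).updateRow i (fun j => Polynomial.derivative (Mpoly G i j))))
      = ((Mpoly G).updateRow i (fun j => Polynomial.derivative (Mpoly G i j))).map
          (Polynomial.eval 1) from rfl]
    rw [Matrix.map_updateRow, Mpoly_eval_one]
    have hrow : (Polynomial.eval 1 ∘ fun j => Polynomial.derivative (Mpoly G i j))
        = (G.lapMatrix ℂ) i + ((G.degree i : ℂ) - 2) • (Pi.single i 1 : Fin n → ℂ) := by
      funext j
      rw [Function.comp_apply, Mpoly_deriv_eval_one]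
      simp only [Pi.add_apply, Pi.smul_apply, Pi.single_apply, smul_eq_mul]
      by_cases h : i = j
      · subst h; simp
      · rw [if_neg h, if_neg (fun hh => h hh.symm)]; ring
    rw [hrow, Matrix.det_updateRow_add, Matrix.updateRow_eq_self, lap_det_zero,
      Matrix.det_updateRow_smul, det_updateRow_single, lap_minor_det, zero_add]
  rw [Finset.sum_congr rfl (fun i _ => hterm i), ← Finset.sum_mul]

end Final


theorem stmt1 {n : ℕ} (G : SimpleGraph (Fin n)) [DecidableRel G.Adj]
    (hG : G.Connected) (m r : ℕ) (hm : G.edgeFinset.card = m)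
    (hr : m + 1 = n + r) (hr1 : 1 < r) :
    Filter.Tendsto (fun t : ℂ =>
        (1 - t) ^ (-(r : ℤ)) * (1 - t ^ 2) ^ (m - n) *
          Matrix.det ((1 : Matrix (Fin n) (Fin n) ℂ) - t • G.adjMatrix ℂ
            + t ^ 2 • (Matrix.diagonal (fun i => (G.degree i : ℂ)) - 1)))
      (𝓝[≠] 1)
      (𝓝 ((2 : ℂ) ^ r * (1 - (r : ℂ)) * (numSpanningTrees G : ℂ))) := by
  haveI : Nonempty (Fin n) := hG.nonempty
  obtain ⟨r', rfl⟩ : ∃ r', r = r' + 2 := ⟨r - 2, by omega⟩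
  have hmn : m - n = r' + 1 := by omega
  set κ : ℂ := (numSpanningTrees G : ℂ) with hκ
  set g : Polynomial ℂ := Ppoly G /ₘ (Polynomial.X - Polynomial.C 1) with hg
  have hroot : (Ppoly G).IsRoot 1 := Ppoly_eval_one G
  have hfac : (Polynomial.X - Polynomial.C 1) * g = Ppoly G :=
    (Polynomial.mul_divByMonic_eq_iff_isRoot).mpr hroot
  have hg1 : g.eval 1 = (Polynomial.derivative (Ppoly G)).eval 1 := by
    have hd := congrArg Polynomial.derivative hfac
    rw [Polynomial.derivative_mul] at hd
    have heval := congrArg (Polynomial.eval 1) hd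
    simp only [Polynomial.eval_add, Polynomial.eval_mul, Polynomial.eval_sub,
      Polynomial.derivative_sub, Polynomial.derivative_X, Polynomial.derivative_C,
      Polynomial.eval_X, Polynomial.eval_C, Polynomial.eval_one, sub_zero] at heval
    rw [← heval]
    ring
  have hsum : (∑ i, ((G.degree i : ℂ) - 2)) = 2 * (r' + 1) := by
    have hdeg : ∑ i, G.degree i = 2 * m := by
      rw [← hm]; exact G.sum_degrees_eq_twice_card_edges
    have hsplit : (∑ i, ((G.degree i : ℂ) - 2))
        = (∑ i, (G.degree i : ℂ)) - 2 * n := by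
      rw [Finset.sum_sub_distrib, Finset.sum_const, Finset.card_univ, Fintype.card_fin,
        nsmul_eq_mul]
      ring
    have h2 : (∑ i, (G.degree i : ℂ)) = ((∑ i, G.degree i : ℕ) : ℂ) := by push_cast; rfl
    rw [hsplit, h2, hdeg, show m = n + r' + 1 from by omega]
    push_cast
    ring
  have hgval : g.eval 1 = 2 * (r' + 1) * κ := by
    rw [hg1, Ppoly_deriv_eval_one, hsum]
  set F : ℂ → ℂ := fun t => -((1 + t) ^ (r' + 1) * g.eval t) with hF
  have hcont : Continuous F := by
    apply Continuous.neg
    exact ((continuous_const.add continuous_id).pow _).mul (Polynomial.continuous g)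
  have hFtend : Tendsto F (𝓝[≠] (1 : ℂ)) (𝓝 (F 1)) :=
    (hcont.tendsto 1).mono_left nhdsWithin_le_nhds
  have hval : F 1 = (2 : ℂ) ^ (r' + 2) * (1 - ((r' + 2 : ℕ) : ℂ)) * κ := by
    rw [hF]
    simp only []
    rw [hgval]
    push_cast
    ring
  have hEq : F =ᶠ[𝓝[≠] (1 : ℂ)] (fun t : ℂ =>
      (1 - t) ^ (-((r' + 2 : ℕ) : ℤ)) * (1 - t ^ 2) ^ (m - n) *
        Matrix.det ((1 : Matrix (Fin n) (Fin n) ℂ) - t • G.adjMatrix ℂ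
          + t ^ 2 • (Matrix.diagonal (fun i => (G.degree i : ℂ)) - 1))) := by
    filter_upwards [self_mem_nhdsWithin] with t ht
    have ht1 : t ≠ 1 := ht
    have h1t : (1 : ℂ) - t ≠ 0 := sub_ne_zero.mpr (Ne.symm ht1)
    show F t = _
    rw [hmn, ← Ppoly_eval, ← hfac, _root_.zpow_neg, zpow_natCast]
    rw [Polynomial.eval_mul, Polynomial.eval_sub, Polynomial.eval_X, Polynomial.eval_C]
    rw [show ((1 : ℂ) - t ^ 2) = (1 - t) * (1 + t) from by ring, mul_pow]
    rw [hF]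
    simp only []
    field_simp
    ring
  have hfinal := Tendsto.congr' hEq hFtend
  rwa [hval] at hfinal
end

section
/- Let G be a connected finite graph with n vertices and m edges, and W = W(G) a weighted matrix of G. Then the reciprocal of the second weighted Bartholdi zeta function of G satisfies ζ_1(G,w,u,t)^{-1} = det(I_{2m} − t(B_w − (1−u)J_0)) = (1 − (1−u)^2 t^2)^{m−n} · det(I_n − t·W + (1−u)t^2(D_w − (1−u)I_n)). -/
open Finset SimpleGraph Matrix

/-- The weighted arc (dart) matrix `B_w`: its `(e,f)` entry is `w(f)` when the terminus of `e`
is the origin of `f`, and `0` otherwise. -/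
noncomputable def dartWeightMatrix {V : Type*} [DecidableEq V] (G : SimpleGraph V)
    (W : Matrix V V ℂ) : Matrix G.Dart G.Dart ℂ :=
  fun d e => if d.snd = e.fst then W e.fst e.snd else 0

/-- The matrix `J₀`: its `(e,f)` entry is `1` when `f = e⁻¹`, and `0` otherwise. -/
noncomputable def dartFlipMatrix {V : Type*} [DecidableEq V] (G : SimpleGraph V) :
    Matrix G.Dart G.Dart ℂ :=
  fun d e => if e = d.symm then 1 else 0

namespace Stmt10Aux

variable {n : ℕ} (G : SimpleGraph (Fin n)) [DecidableRel G.Adj]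

lemma dart_symm_fst (d : G.Dart) : d.symm.fst = d.snd := rfl

lemma dart_symm_snd (d : G.Dart) : d.symm.snd = d.fst := rfl

/-- The positively oriented darts. -/
abbrev Pos := {d : G.Dart // d.fst < d.snd}

/-- Darts are two copies of the positively oriented darts. -/
def dartEquiv : (Pos G ⊕ Pos G) ≃ G.Dart where
  toFun x := Sum.elim (fun p => p.1) (fun p => p.1.symm) x
  invFun d :=
    if h : d.fst < d.snd then Sum.inl ⟨d, h⟩
    else Sum.inr ⟨d.symm, by
      rw [dart_symm_fst, dart_symm_snd]
      exact lt_of_le_of_ne (not_lt.mp h) (Dart.snd_ne_fst d)⟩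
  left_inv := by
    rintro (⟨d, hd⟩ | ⟨d, hd⟩)
    · simp only [Sum.elim_inl]
      exact dif_pos hd
    · simp only [Sum.elim_inr]
      have h1 : ¬ d.symm.fst < d.symm.snd := by
        rw [dart_symm_fst, dart_symm_snd]; exact not_lt.mpr hd.le
      refine (dif_neg h1).trans ?_
      exact congrArg Sum.inr (Subtype.ext (Dart.symm_symm d))
  right_inv := by
    intro d
    dsimp only
    by_cases h : d.fst < d.snd
    · rw [dif_pos h]
      rfl
    · rw [dif_neg h]
      exact Dart.symm_symm d

lemma hne_pos (p q : Pos G) : ¬ ((q.1 : G.Dart) = p.1.symm) := by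
  intro h
  have h2 := q.2
  rw [h, dart_symm_fst, dart_symm_snd] at h2
  exact lt_asymm p.2 h2

lemma flip_submatrix (a : ℂ) :
    ((1 : Matrix G.Dart G.Dart ℂ) + a • dartFlipMatrix G).submatrix (dartEquiv G) (dartEquiv G)
      = Matrix.fromBlocks 1 (a • 1) (a • 1) 1 := by
  ext x y
  have hsymm_inj : Function.Injective (Dart.symm : G.Dart → G.Dart) :=
    (Dart.symm_involutive (G := G)).injective
  rcases x with p | p <;> rcases y with q | q
  · -- inl inl
    simp only [Matrix.submatrix_apply, Matrix.add_apply, Matrix.smul_apply, dartFlipMatrix,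
      Matrix.fromBlocks_apply₁₁, smul_eq_mul, dartEquiv, Equiv.coe_fn_mk, Sum.elim_inl]
    rw [if_neg (hne_pos G p q), mul_zero, add_zero]
    simp [Matrix.one_apply, Subtype.ext_iff]
  · -- inl inr
    simp only [Matrix.submatrix_apply, Matrix.add_apply, Matrix.smul_apply, dartFlipMatrix,
      Matrix.fromBlocks_apply₁₂, smul_eq_mul, dartEquiv, Equiv.coe_fn_mk, Sum.elim_inl,
      Sum.elim_inr]
    rw [Matrix.one_apply_ne (hne_pos G q p), zero_add]
    have : ((q.1.symm = p.1.symm) ↔ (p = q)) := by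
      constructor
      · intro h; exact (Subtype.ext (hsymm_inj h)).symm
      · intro h; rw [h]
    simp only [Matrix.smul_apply, Matrix.one_apply, smul_eq_mul]
    by_cases hpq : p = q
    · rw [if_pos (this.mpr hpq), if_pos hpq]
    · rw [if_neg (fun h => hpq (this.mp h)), if_neg hpq]
  · -- inr inl
    simp only [Matrix.submatrix_apply, Matrix.add_apply, Matrix.smul_apply, dartFlipMatrix,
      Matrix.fromBlocks_apply₂₁, smul_eq_mul, dartEquiv, Equiv.coe_fn_mk, Sum.elim_inl,
      Sum.elim_inr]
    rw [Matrix.one_apply_ne (fun h => hne_pos G p q h.symm), zero_add]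
    have : ((q.1 : G.Dart) = p.1.symm.symm) ↔ (p = q) := by
      rw [Dart.symm_symm]
      constructor
      · intro h; exact (Subtype.ext h).symm
      · intro h; rw [h]
    simp only [Matrix.smul_apply, Matrix.one_apply, smul_eq_mul]
    by_cases hpq : p = q
    · rw [if_pos (this.mpr hpq), if_pos hpq]
    · rw [if_neg (fun h => hpq (this.mp h)), if_neg hpq]
  · -- inr inr
    simp only [Matrix.submatrix_apply, Matrix.add_apply, Matrix.smul_apply, dartFlipMatrix,
      Matrix.fromBlocks_apply₂₂, smul_eq_mul, dartEquiv, Equiv.coe_fn_mk, Sum.elim_inr]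
    have hJ : ¬ (q.1.symm = p.1.symm.symm) := by
      rw [Dart.symm_symm]
      intro h
      exact hne_pos G q p h.symm
    rw [if_neg hJ, mul_zero, add_zero]
    have : ((p.1.symm = q.1.symm) ↔ (p = q)) := by
      constructor
      · intro h; exact Subtype.ext (hsymm_inj h)
      · intro h; rw [h]
    simp only [Matrix.smul_apply, Matrix.one_apply, smul_eq_mul]
    by_cases hpq : p = q
    · rw [if_pos (this.mpr hpq), if_pos hpq]
    · rw [if_neg (fun h => hpq (this.mp h)), if_neg hpq]

lemma det_one_add_smul_flip (a : ℂ) :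
    ((1 : Matrix G.Dart G.Dart ℂ) + a • dartFlipMatrix G).det
      = (1 - a ^ 2) ^ (Fintype.card (Pos G)) := by
  rw [← Matrix.det_submatrix_equiv_self (dartEquiv G), flip_submatrix,
    Matrix.det_fromBlocks_one₂₂]
  have h1 : (1 : Matrix (Pos G) (Pos G) ℂ) - (a • 1) * (a • 1) = (1 - a ^ 2) • 1 := by
    rw [Matrix.smul_mul, Matrix.mul_smul, one_mul, smul_smul, sub_smul, one_smul, ← pow_two]
  rw [h1, Matrix.det_smul, Matrix.det_one, mul_one]

lemma card_pos (m : ℕ) (hm : G.edgeFinset.card = m) : Fintype.card (Pos G) = m := by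
  have h1 := Fintype.card_congr (dartEquiv G)
  rw [Fintype.card_sum] at h1
  have h2 := G.dart_card_eq_twice_card_edges
  rw [hm] at h2
  omega

/-- Terminal incidence matrix. -/
def SM : Matrix (Fin n) G.Dart ℂ := Matrix.of fun v e => if e.snd = v then 1 else 0

/-- Weighted origin incidence matrix. -/
def LM (W : Matrix (Fin n) (Fin n) ℂ) : Matrix (Fin n) G.Dart ℂ :=
  Matrix.of fun v e => if e.fst = v then W e.fst e.snd else 0

lemma sum_dart (u v : Fin n) (g : G.Dart → ℂ) :
    (∑ f : G.Dart, if f.fst = u ∧ f.snd = v then g f else 0)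
      = if h : G.Adj u v then g ⟨(u, v), h⟩ else 0 := by
  by_cases h : G.Adj u v
  · rw [dif_pos h, Finset.sum_eq_single (⟨(u, v), h⟩ : G.Dart)]
    · rw [if_pos ⟨rfl, rfl⟩]
    · intro f _ hf
      rw [if_neg]
      rintro ⟨h1, h2⟩
      exact hf (Dart.ext _ _ (Prod.ext h1 h2))
    · intro hmem; exact absurd (Finset.mem_univ _) hmem
  · rw [dif_neg h]
    apply Finset.sum_eq_zero
    intro f _
    rw [if_neg]
    rintro ⟨h1, h2⟩
    exact h (h1 ▸ h2 ▸ f.adj)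

variable (W : Matrix (Fin n) (Fin n) ℂ)

lemma transpose_SM_mul_LM : (SM G)ᵀ * LM G W = dartWeightMatrix G W := by
  ext d e
  simp only [Matrix.mul_apply, Matrix.transpose_apply, SM, LM, dartWeightMatrix, Matrix.of_apply,
    ite_mul, one_mul, zero_mul]
  rw [Finset.sum_ite_eq Finset.univ d.snd
    (fun v => if e.fst = v then W e.fst e.snd else 0), if_pos (Finset.mem_univ _)]
  by_cases h : e.fst = d.snd
  · rw [if_pos h, if_pos h.symm]
  · rw [if_neg h, if_neg (fun hh => h hh.symm)]

lemma LM_mul_transpose_SM (hW0 : ∀ i j, ¬ G.Adj i j → W i j = 0) :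
    LM G W * (SM G)ᵀ = W := by
  ext i j
  simp only [Matrix.mul_apply, Matrix.transpose_apply, SM, LM, Matrix.of_apply]
  have key : ∀ f : G.Dart,
      (if f.fst = i then W f.fst f.snd else 0) * (if f.snd = j then 1 else 0)
        = if f.fst = i ∧ f.snd = j then W f.fst f.snd else 0 := by
    intro f
    by_cases h1 : f.fst = i <;> by_cases h2 : f.snd = j <;> simp [h1, h2]
  rw [Finset.sum_congr rfl fun f _ => key f, sum_dart]
  by_cases h : G.Adj i j
  · rw [dif_pos h]
  · rw [dif_neg h, hW0 i j h]

lemma flip_mul_flip : dartFlipMatrix G * dartFlipMatrix G = 1 := by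
  ext d e
  simp only [Matrix.mul_apply, dartFlipMatrix, ite_mul, one_mul, zero_mul]
  rw [Finset.sum_ite_eq' Finset.univ d.symm (fun f => if e = f.symm then (1 : ℂ) else 0),
    if_pos (Finset.mem_univ _), Dart.symm_symm]
  rw [Matrix.one_apply]
  by_cases h : d = e
  · rw [if_pos h.symm, if_pos h]
  · rw [if_neg (fun hh => h hh.symm), if_neg h]

lemma LM_mul_flip : LM G W * dartFlipMatrix G
    = Matrix.of (fun v f => if f.snd = v then W f.snd f.fst else 0) := by
  ext v f
  simp only [Matrix.mul_apply, dartFlipMatrix, LM, Matrix.of_apply, mul_ite, mul_one, mul_zero]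
  have key : ∀ e : G.Dart, (f = e.symm) = (e = f.symm) := by
    intro e
    apply propext
    constructor
    · intro h; rw [h, Dart.symm_symm]
    · intro h; rw [h, Dart.symm_symm]
  simp_rw [key]
  rw [Finset.sum_ite_eq' Finset.univ f.symm
    (fun e => if e.fst = v then W e.fst e.snd else 0), if_pos (Finset.mem_univ _)]
  rw [dart_symm_fst, dart_symm_snd]

lemma LM_mul_flip_mul_transpose_SM (hW0 : ∀ i j, ¬ G.Adj i j → W i j = 0) :
    LM G W * dartFlipMatrix G * (SM G)ᵀ = Matrix.diagonal (fun i => ∑ j, W i j) := by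
  rw [LM_mul_flip]
  ext i j
  simp only [Matrix.mul_apply, Matrix.transpose_apply, SM, Matrix.of_apply, mul_ite, mul_one,
    mul_zero]
  by_cases hij : i = j
  · subst hij
    rw [Matrix.diagonal_apply_eq]
    have key1 : ∀ f : G.Dart,
        (if f.snd = i then (if f.snd = i then W f.snd f.fst else 0) else 0)
          = ∑ j, if f.fst = j ∧ f.snd = i then W i j else 0 := by
      intro f
      have : ∀ j, (if f.fst = j ∧ f.snd = i then W i j else 0)
          = if f.fst = j then (if f.snd = i then W i j else 0) else 0 := by
        intro j
        by_cases h1 : f.fst = j <;> by_cases h2 : f.snd = i <;> simp [h1, h2]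
      rw [Finset.sum_congr rfl fun j _ => this j,
        Finset.sum_ite_eq Finset.univ f.fst (fun j => if f.snd = i then W i j else 0),
        if_pos (Finset.mem_univ _)]
      by_cases h2 : f.snd = i
      · rw [if_pos h2, if_pos h2, if_pos h2, h2]
      · rw [if_neg h2, if_neg h2]
    rw [Finset.sum_congr rfl fun f _ => key1 f, Finset.sum_comm]
    refine Finset.sum_congr rfl fun j _ => ?_
    rw [sum_dart]
    by_cases h : G.Adj j i
    · rw [dif_pos h]
    · rw [dif_neg h, hW0 i j (fun hh => h hh.symm)]
  · rw [Matrix.diagonal_apply_ne _ hij]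
    apply Finset.sum_eq_zero
    intro f _
    by_cases h1 : f.snd = i <;> by_cases h2 : f.snd = j
    · exact absurd (h1.symm.trans h2) hij
    · simp [h1, h2, hij, Ne.symm hij]
    · simp [h1, h2, hij, Ne.symm hij]
    · simp [h1, h2, hij, Ne.symm hij]

end Stmt10Aux

open Stmt10Aux in
/-- Mizuno–Sato. -/
theorem stmt10 {n : ℕ} (G : SimpleGraph (Fin n)) [DecidableRel G.Adj]
    (hG : G.Connected) (m : ℕ) (hm : G.edgeFinset.card = m)
    (W : Matrix (Fin n) (Fin n) ℂ)
    (hW0 : ∀ i j, ¬ G.Adj i j → W i j = 0) :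
    ∀ u t : ℂ,
      Matrix.det ((1 : Matrix G.Dart G.Dart ℂ)
          - t • (dartWeightMatrix G W - (1 - u) • dartFlipMatrix G))
        * (1 - (1 - u) ^ 2 * t ^ 2) ^ n
      = (1 - (1 - u) ^ 2 * t ^ 2) ^ m *
        Matrix.det ((1 : Matrix (Fin n) (Fin n) ℂ) - t • W
          + ((1 - u) * t ^ 2) • (Matrix.diagonal (fun i => ∑ j, W i j) - (1 - u) • 1)) := by
  intro u t
  have hn : n ≠ 0 := by
    have h1 : 0 < n := Fin.pos_iff_nonempty.mpr hG.nonempty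
    omega
  by_cases hc : (1 : ℂ) - (1 - u) ^ 2 * t ^ 2 = 0
  · -- degenerate case
    rw [hc, zero_pow hn, mul_zero]
    rcases Nat.eq_zero_or_pos m with hm0 | hmpos
    · subst hm0
      have hWz : W = 0 := by
        ext i j
        apply hW0
        intro hadj
        have hmem : s(i, j) ∈ G.edgeFinset := by
          rw [mem_edgeFinset]
          exact hadj
        have := Finset.card_pos.mpr ⟨_, hmem⟩
        omega
      subst hWz
      have hmat : (1 : Matrix (Fin n) (Fin n) ℂ) - t • (0 : Matrix (Fin n) (Fin n) ℂ)
          + ((1 - u) * t ^ 2) • (Matrix.diagonal (fun i => ∑ j, (0 : Matrix (Fin n) (Fin n) ℂ) i j)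
            - (1 - u) • 1)
          = ((1 : ℂ) - (1 - u) ^ 2 * t ^ 2) • 1 := by
        ext i j
        simp only [Matrix.add_apply, Matrix.sub_apply, Matrix.smul_apply, Matrix.zero_apply,
          Finset.sum_const_zero, Matrix.diagonal_apply, smul_eq_mul]
        by_cases h : i = j <;> simp [h] <;> ring
      rw [hmat, hc, zero_smul, pow_zero, one_mul]
      haveI : Nonempty (Fin n) := Fin.pos_iff_nonempty.mp (by omega)
      rw [Matrix.det_zero]
    · rw [zero_pow (by omega : m ≠ 0), zero_mul]
  · -- main case
    have hJJ := flip_mul_flip G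
    have hBw := transpose_SM_mul_LM G W
    have hLS := LM_mul_transpose_SM G W hW0
    have hLJS := LM_mul_flip_mul_transpose_SM G W hW0
    set a : ℂ := t * (1 - u) with ha
    set c : ℂ := 1 - (1 - u) ^ 2 * t ^ 2 with hcdef
    have hca : (1 : ℂ) - a ^ 2 = c := by rw [ha, hcdef]; ring
    have hdetA0 : ((1 : Matrix G.Dart G.Dart ℂ) + a • dartFlipMatrix G).det = c ^ m := by
      rw [det_one_add_smul_flip, card_pos G m hm, hca]
    set J := dartFlipMatrix G with hJdef
    set A : Matrix G.Dart G.Dart ℂ := 1 + a • J with hA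
    set N : Matrix G.Dart G.Dart ℂ := c⁻¹ • (1 - a • J) with hN
    have hLJS' : LM G W * (J * (SM G)ᵀ) = Matrix.diagonal (fun i => ∑ j, W i j) := by
      rw [← Matrix.mul_assoc]; exact hLJS
    clear_value J
    have hstep0 : A * (1 - a • J) = c • 1 := by
      rw [hA]
      simp only [mul_sub, sub_mul, add_mul, mul_add, one_mul, mul_one, smul_mul_assoc,
        mul_smul_comm, hJJ, smul_smul]
      rw [← hca]
      module
    have hAN : A * N = 1 := by
      rw [hN, Matrix.mul_smul, hstep0, smul_smul, inv_mul_cancel₀ hc, one_smul]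
    have hmat1 : (1 : Matrix G.Dart G.Dart ℂ) - t • (dartWeightMatrix G W - (1 - u) • J)
        = A - (t • (SM G)ᵀ) * LM G W := by
      rw [hA, ← hBw, Matrix.smul_mul]
      ext d e
      simp only [Matrix.sub_apply, Matrix.add_apply, Matrix.smul_apply, smul_eq_mul]
      rw [ha]
      ring
    have hfactor : A - (t • (SM G)ᵀ) * LM G W
        = A * (1 - (N * (t • (SM G)ᵀ)) * LM G W) := by
      rw [mul_sub, mul_one, ← Matrix.mul_assoc, ← Matrix.mul_assoc, hAN, Matrix.one_mul]
    have hLNS : LM G W * (N * (t • (SM G)ᵀ))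
        = (t * c⁻¹) • (W - a • Matrix.diagonal (fun i => ∑ j, W i j)) := by
      rw [hN]
      simp only [Matrix.smul_mul, Matrix.mul_smul, Matrix.sub_mul, Matrix.mul_sub,
        Matrix.one_mul, Matrix.mul_one, Matrix.mul_assoc, hLS, hLJS', smul_smul, smul_sub]
      module
    -- now compute
    rw [hmat1, hfactor, Matrix.det_mul, hdetA0]
    rw [Matrix.det_one_sub_mul_comm, hLNS]
    rw [mul_assoc]
    congr 1
    have hdet2 : (c : ℂ) ^ n * Matrix.det ((1 : Matrix (Fin n) (Fin n) ℂ)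
        - (t * c⁻¹) • (W - a • Matrix.diagonal (fun i => ∑ j, W i j)))
        = Matrix.det (c • ((1 : Matrix (Fin n) (Fin n) ℂ)
          - (t * c⁻¹) • (W - a • Matrix.diagonal (fun i => ∑ j, W i j)))) := by
      rw [Matrix.det_smul, Fintype.card_fin]
    have hmat2 : c • ((1 : Matrix (Fin n) (Fin n) ℂ)
        - (t * c⁻¹) • (W - a • Matrix.diagonal (fun i => ∑ j, W i j)))
        = (1 : Matrix (Fin n) (Fin n) ℂ) - t • W
          + ((1 - u) * t ^ 2) • (Matrix.diagonal (fun i => ∑ j, W i j) - (1 - u) • 1) := by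
      ext i j
      simp only [Matrix.add_apply, Matrix.sub_apply, Matrix.smul_apply, smul_eq_mul]
      have hc2 : c * (t * c⁻¹ * (W i j - a * Matrix.diagonal (fun i => ∑ j, W i j) i j))
          = t * (W i j - a * Matrix.diagonal (fun i => ∑ j, W i j) i j) := by
        rw [← mul_assoc, mul_comm c (t * c⁻¹), mul_assoc t c⁻¹ c,
          inv_mul_cancel₀ hc, mul_one]
      rw [mul_sub c, hc2, hcdef, ha]
      ring
    rw [mul_comm, hdet2, hmat2]
end

section
/- Let G be a connected finite graph with n vertices, Γ a finite group, α: D(G) → Γ an ordinary voltage assignment, and W(G) a symmetric weighted matrix of G. Let ρ_1 = 1, ρ_2, ..., ρ_k be a complete set of inequivalent irreducible (complex) representations of Γ with degrees f_i (f_1 = 1). Then f_{w̃}(G^α, u, t) = f_w(G, u, t) · ∏_{i=2}^{k} det( I_{n f_i} − t Σ_{g ∈ Γ} ρ_i(g) ⊗ W_g + (1−u) t^2 · I_{f_i} ⊗ (D_w − (1−u)I_n) )^{f_i}. -/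
open Finset SimpleGraph Matrix
open scoped Kronecker

/-- The derived graph (`Γ`-covering) `G^α` of an ordinary voltage assignment `α`. -/
def derivedGraph {V : Type*} {Γ : Type*} [Group Γ] (G : SimpleGraph V) (α : V → V → Γ)
    (hα : ∀ u v, G.Adj u v → α v u = (α u v)⁻¹) : SimpleGraph (V × Γ) where
  Adj x y := G.Adj x.1 y.1 ∧ y.2 = x.2 * α x.1 y.1
  symm := by
    constructor
    rintro ⟨u, g⟩ ⟨v, h⟩ ⟨hadj, he⟩
    dsimp only at *
    refine ⟨hadj.symm, ?_⟩
    rw [he, hα u v hadj]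
    group
  loopless := by
    constructor
    rintro ⟨u, g⟩ ⟨h, _⟩
    exact G.loopless.irrefl u h

/-- The weight on the covering derived from a weight `W` on the base graph. -/
noncomputable def derivedWeight {V : Type*} {Γ : Type*} [Group Γ] [DecidableEq Γ]
    (G : SimpleGraph V) [DecidableRel G.Adj] (α : V → V → Γ) (W : Matrix V V ℂ) :
    Matrix (V × Γ) (V × Γ) ℂ :=
  fun x y => if G.Adj x.1 y.1 ∧ y.2 = x.2 * α x.1 y.1 then W x.1 y.1 else 0

/-- The matrix `W_g`: the part of the weighted matrix supported on arcs with voltage `g`. -/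
noncomputable def voltagePart {V : Type*} {Γ : Type*} [DecidableEq Γ]
    (G : SimpleGraph V) [DecidableRel G.Adj] (α : V → V → Γ) (W : Matrix V V ℂ) (g : Γ) :
    Matrix V V ℂ :=
  fun i j => if G.Adj i j ∧ α i j = g then W i j else 0

/-- A matrix representation is irreducible if it is nonzero-dimensional and admits no proper
nonzero invariant subspace. -/
def IsIrreducibleRep {Γ : Type*} [Group Γ] {d : ℕ} (σ : Γ →* Matrix (Fin d) (Fin d) ℂ) : Prop :=
  0 < d ∧ ∀ p : Submodule ℂ (Fin d → ℂ), (∀ g, ∀ v ∈ p, (σ g).mulVec v ∈ p) → p = ⊥ ∨ p = ⊤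

lemma my_det_blockDiagonal' {α : Type*} [Fintype α] [DecidableEq α] [LinearOrder α]
    {m' : α → Type*} [∀ i, Fintype (m' i)] [∀ i, DecidableEq (m' i)]
    (d : ∀ i, Matrix (m' i) (m' i) ℂ) :
    (blockDiagonal' d).det = ∏ i, (d i).det := by
  rw [(blockTriangular_blockDiagonal' d).det_fintype]
  refine Finset.prod_congr rfl fun a _ => ?_
  let e : m' a ≃ {x : Σ i, m' i // x.1 = a} :=
    { toFun := fun y => ⟨⟨a, y⟩, rfl⟩
      invFun := fun x => (congrArg m' x.2).mp x.1.2
      left_inv := fun y => rfl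
      right_inv := by rintro ⟨⟨i, y⟩, rfl⟩; rfl }
  rw [← Matrix.det_submatrix_equiv_self e]
  congr 1
  ext x y
  simp only [toSquareBlock_def, submatrix_apply]
  show blockDiagonal' d ((e x) : Σ i, m' i) ((e y) : Σ i, m' i) = d a x y
  exact Matrix.blockDiagonal'_apply_eq d a x y

lemma schur_scalar {Γ : Type*} [Group Γ] {d : ℕ} (σ : Γ →* Matrix (Fin d) (Fin d) ℂ)
    (hirr : IsIrreducibleRep σ) (S : Matrix (Fin d) (Fin d) ℂ)
    (hS : ∀ g, σ g * S = S * σ g) : ∃ c : ℂ, S = c • 1 := by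
  obtain ⟨hd, hsub⟩ := hirr
  haveI : NeZero d := ⟨hd.ne'⟩
  haveI : Nontrivial (Fin d → ℂ) := Pi.nontrivial
  obtain ⟨c, hc⟩ := Module.End.exists_eigenvalue (Matrix.mulVecLin S)
  obtain ⟨v, hv⟩ := hc.exists_hasEigenvector
  refine ⟨c, ?_⟩
  set T : Matrix (Fin d) (Fin d) ℂ := S - c • 1 with hT
  have hTv : T.mulVec v = 0 := by
    have := hv.apply_eq_smul
    simp only [Matrix.mulVecLin_apply] at this
    simp [hT, Matrix.sub_mulVec, this, Matrix.smul_mulVec, Matrix.one_mulVec]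
  set p : Submodule ℂ (Fin d → ℂ) := LinearMap.ker T.mulVecLin with hp
  have hinv : ∀ g, ∀ w ∈ p, (σ g).mulVec w ∈ p := by
    intro g w hw
    simp only [hp, LinearMap.mem_ker, Matrix.mulVecLin_apply] at hw ⊢
    rw [Matrix.mulVec_mulVec]
    have hcomm : T * σ g = σ g * T := by
      simp [hT, Matrix.sub_mul, Matrix.mul_sub, hS g, Matrix.smul_mul, Matrix.mul_smul]
    rw [hcomm, ← Matrix.mulVec_mulVec, hw, Matrix.mulVec_zero]
  have hne : p ≠ ⊥ := by
    intro h
    have : v ∈ p := by simp [hp, LinearMap.mem_ker, Matrix.mulVecLin_apply, hTv]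
    rw [h, Submodule.mem_bot] at this
    exact hv.2 this
  have htop : p = ⊤ := (hsub p hinv).resolve_left hne
  have hT0 : T = 0 := by
    ext i j
    have : T.mulVec (Pi.single j 1) = 0 := by
      have : (Pi.single j 1 : Fin d → ℂ) ∈ p := htop ▸ Submodule.mem_top
      simpa [hp, LinearMap.mem_ker, Matrix.mulVecLin_apply] using this
    have := congrFun this i
    simpa [Matrix.mulVec_single] using this
  have := sub_eq_zero.mp hT0
  simpa [hT] using this

lemma rep_intertwine {Γ : Type*} [Group Γ] [Fintype Γ] {d e : ℕ}
    (σ : Γ →* Matrix (Fin d) (Fin d) ℂ) (τ : Γ →* Matrix (Fin e) (Fin e) ℂ)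
    (E : Matrix (Fin d) (Fin e) ℂ) (h : Γ) :
    σ h * (∑ g, σ g * E * τ g⁻¹) = (∑ g, σ g * E * τ g⁻¹) * τ h := by
  rw [Matrix.mul_sum, Matrix.sum_mul]
  apply Fintype.sum_equiv (Equiv.mulLeft h)
  intro g
  show σ h * (σ g * E * τ g⁻¹) = σ (h * g) * E * τ (h * g)⁻¹ * τ h
  rw [_root_.map_mul σ h g, _root_.mul_inv_rev, _root_.map_mul τ]
  simp only [Matrix.mul_assoc]
  congr 2
  rw [← _root_.map_mul, inv_mul_cancel, _root_.map_one, Matrix.mul_one]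

lemma rep_avg_scalar {Γ : Type*} [Group Γ] [Fintype Γ] {d : ℕ}
    (σ : Γ →* Matrix (Fin d) (Fin d) ℂ) (hirr : IsIrreducibleRep σ)
    (E : Matrix (Fin d) (Fin d) ℂ) :
    ∑ g, σ g * E * σ g⁻¹ = (((Fintype.card Γ : ℂ) * E.trace) / (d : ℂ)) • 1 := by
  obtain ⟨c, hc⟩ := schur_scalar σ hirr _ (fun h => rep_intertwine σ σ E h)
  have htr : (∑ g : Γ, σ g * E * σ g⁻¹).trace = (Fintype.card Γ : ℂ) * E.trace := by
    rw [Matrix.trace_sum]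
    have h1 : ∀ g : Γ, (σ g * E * σ g⁻¹).trace = E.trace := by
      intro g
      rw [Matrix.trace_mul_cycle, ← _root_.map_mul, inv_mul_cancel, _root_.map_one,
        Matrix.one_mul]
    simp [h1]
  rw [hc] at htr ⊢
  rw [Matrix.trace_smul, Matrix.trace_one, smul_eq_mul] at htr
  have hd : (d : ℂ) ≠ 0 := by
    exact_mod_cast Nat.cast_ne_zero.mpr hirr.1.ne'
  congr 1
  rw [eq_div_iff hd, ← htr]
  simp [Fintype.card_fin]
lemma avg_entry {Γ : Type*} [Group Γ] [Fintype Γ] {d1 d2 : ℕ}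
    (σ : Γ →* Matrix (Fin d1) (Fin d1) ℂ) (τ : Γ →* Matrix (Fin d2) (Fin d2) ℂ)
    (q : Fin d1) (p : Fin d2) (c : Fin d1) (a : Fin d2) :
    (∑ g : Γ, σ g * single q p (1 : ℂ) * τ g⁻¹) c a
      = ∑ g : Γ, σ g c q * τ g⁻¹ p a := by
  rw [Matrix.sum_apply]
  refine Finset.sum_congr rfl fun g _ => ?_
  rw [Matrix.mul_apply]
  have h1 : ∀ x, (σ g * single q p (1 : ℂ)) c x
      = σ g c q * (if p = x then 1 else 0) := by
    intro x
    rw [Matrix.mul_apply]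
    simp [Matrix.single_apply, ite_and, Finset.sum_ite_eq', mul_comm]
  simp only [h1]
  simp [Finset.sum_ite_eq', mul_assoc]

/-- Mizuno–Sato. -/
theorem stmt14 {n : ℕ} (G : SimpleGraph (Fin n)) [DecidableRel G.Adj] (hG : G.Connected)
    {Γ : Type*} [Group Γ] [Fintype Γ] [DecidableEq Γ]
    (α : Fin n → Fin n → Γ) (hα : ∀ u v, G.Adj u v → α v u = (α u v)⁻¹)
    (W : Matrix (Fin n) (Fin n) ℂ)
    (hWsym : ∀ i j, W i j = W j i)
    (hW0 : ∀ i j, ¬ G.Adj i j → W i j = 0)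
    (k : ℕ) (f : Fin (k + 1) → ℕ)
    (ρ : (i : Fin (k + 1)) → Γ →* Matrix (Fin (f i)) (Fin (f i)) ℂ)
    (hf1 : f 0 = 1) (hρ1 : ∀ g, ρ 0 g = 1)
    (hirr : ∀ i, IsIrreducibleRep (ρ i))
    (hinequiv : ∀ i j, i ≠ j → ∀ S : Matrix (Fin (f j)) (Fin (f i)) ℂ,
      (∀ g, ρ j g * S = S * ρ i g) → S = 0)
    (hcomplete : ∑ i, (f i) ^ 2 = Fintype.card Γ) :
    ∀ u t : ℂ,
      Matrix.det ((1 : Matrix (Fin n × Γ) (Fin n × Γ) ℂ) - t • derivedWeight G α W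
          + ((1 - u) * t ^ 2) •
            (Matrix.diagonal (fun x => ∑ y, derivedWeight G α W x y) - (1 - u) • 1))
      = Matrix.det ((1 : Matrix (Fin n) (Fin n) ℂ) - t • W
          + ((1 - u) * t ^ 2) • (Matrix.diagonal (fun i => ∑ j, W i j) - (1 - u) • 1)) *
        ∏ i ∈ Finset.univ.erase 0,
          (Matrix.det ((1 : Matrix (Fin (f i) × Fin n) (Fin (f i) × Fin n) ℂ)
              - t • (∑ g, ρ i g ⊗ₖ voltagePart G α W g)
              + ((1 - u) * t ^ 2) •
                ((1 : Matrix (Fin (f i)) (Fin (f i)) ℂ) ⊗ₖ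
                  (Matrix.diagonal (fun j => ∑ l, W j l) - (1 - u) • 1)))) ^ (f i) := by
  intro u t
  -- abbreviations
  set c : ℂ := (1 - u) * t ^ 2 with hc
  set D : Matrix (Fin n) (Fin n) ℂ :=
    Matrix.diagonal (fun j => ∑ l, W j l) - (1 - u) • 1 with hD
  set P : Matrix Γ ((i : Fin (k + 1)) × (Fin (f i) × Fin (f i))) ℂ :=
    fun g x => ρ x.1 g x.2.1 x.2.2 with hP
  set Q : Matrix ((i : Fin (k + 1)) × (Fin (f i) × Fin (f i))) Γ ℂ :=
    fun x g => ((f x.1 : ℂ) / (Fintype.card Γ : ℂ)) * ρ x.1 g⁻¹ x.2.2 x.2.1 with hQ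
  set Rm : Γ → Matrix Γ Γ ℂ := fun g a b => if b = a * g then 1 else 0 with hRm
  set Bm : Γ → Matrix ((i : Fin (k + 1)) × (Fin (f i) × Fin (f i)))
      ((i : Fin (k + 1)) × (Fin (f i) × Fin (f i))) ℂ :=
    fun g => blockDiagonal' (fun i => (1 : Matrix (Fin (f i)) (Fin (f i)) ℂ) ⊗ₖ ρ i g) with hBm
  have hfpos : ∀ i, 0 < f i := fun i => (hirr i).1
  have hNne : (Fintype.card Γ : ℂ) ≠ 0 := by
    exact_mod_cast Nat.cast_ne_zero.mpr Fintype.card_ne_zero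
  -- sum of voltage parts
  have hsumW : ∀ p q, ∑ g : Γ, voltagePart G α W g p q = W p q := by
    intro p q
    by_cases hadj : G.Adj p q
    · simp only [voltagePart, hadj, true_and]
      rw [Finset.sum_ite_eq (Finset.univ) (α p q) (fun _ => W p q)]
      simp
    · simp [voltagePart, hadj, hW0 p q hadj]
  -- Q * P = 1
  have hQP : Q * P = 1 := by
    ext ⟨i, a, b⟩ ⟨j, cc, dd⟩
    rw [Matrix.mul_apply]
    simp only [hQ, hP]
    have hterm : ∀ g : Γ, (f i : ℂ) / (Fintype.card Γ : ℂ) * ρ i g⁻¹ b a * ρ j g cc dd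
        = ((f i : ℂ) / (Fintype.card Γ : ℂ)) * (ρ j g cc dd * ρ i g⁻¹ b a) := by
      intro g; ring
    rw [Finset.sum_congr rfl (fun g _ => hterm g), ← Finset.mul_sum]
    by_cases hij : i = j
    · subst hij
      have key := rep_avg_scalar (ρ i) (hirr i) (single dd b 1)
      have key2 := congrFun (congrFun key cc) a
      rw [avg_entry] at key2
      rw [key2]
      have htr : (single dd b (1 : ℂ)).trace = if dd = b then 1 else 0 := by
        by_cases h : dd = b
        · subst h; simp [Matrix.trace_single_eq_same]
        · simp [Matrix.trace_single_eq_of_ne (c := (1 : ℂ)) (h := h), h]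
      have hfne : (f i : ℂ) ≠ 0 := Nat.cast_ne_zero.mpr (hfpos i).ne'
      have hsig : ((⟨i, (a, b)⟩ : (i' : Fin (k+1)) × (Fin (f i') × Fin (f i')))
          = ⟨i, (cc, dd)⟩) ↔ (a = cc ∧ b = dd) := by
        constructor
        · intro h
          obtain ⟨h1, h2⟩ := Sigma.mk.inj_iff.mp h
          have := eq_of_heq h2
          exact ⟨congrArg Prod.fst this, congrArg Prod.snd this⟩
        · rintro ⟨rfl, rfl⟩; rfl
      have hR : (if (⟨i, (a, b)⟩ : (i' : Fin (k+1)) × (Fin (f i') × Fin (f i')))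
          = ⟨i, (cc, dd)⟩ then (1:ℂ) else 0) = if a = cc ∧ b = dd then 1 else 0 :=
        if_congr hsig rfl rfl
      rw [Matrix.smul_apply, htr, smul_eq_mul, Matrix.one_apply, Matrix.one_apply, hR]
      by_cases h1 : cc = a <;> by_cases h2 : dd = b
      · subst h1; subst h2
        rw [if_pos (rfl : dd = dd), if_pos (rfl : cc = cc),
          if_pos (⟨rfl, rfl⟩ : cc = cc ∧ dd = dd)]
        field_simp
      · subst h1
        rw [if_neg h2, if_pos (rfl : cc = cc), if_neg
          (fun hcon => h2 hcon.2.symm : ¬(cc = cc ∧ b = dd))]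
        ring
      · subst h2
        rw [if_pos (rfl : dd = dd), if_neg h1, if_neg
          (fun hcon => h1 hcon.1.symm : ¬(a = cc ∧ dd = dd))]
        ring
      · rw [if_neg h2, if_neg h1, if_neg
          (fun hcon => h1 hcon.1.symm : ¬(a = cc ∧ b = dd))]
        ring
    · have hT := hinequiv i j hij (∑ g : Γ, ρ j g * single dd b 1 * ρ i g⁻¹)
        (fun h => rep_intertwine (ρ j) (ρ i) _ h)
      have hT2 := congrFun (congrFun hT cc) a
      rw [avg_entry] at hT2
      rw [Matrix.zero_apply] at hT2
      rw [hT2, mul_zero, Matrix.one_apply_ne (fun h => hij (congrArg Sigma.fst h))]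
  -- P * Q = 1
  have ecard : Fintype.card ((i' : Fin (k + 1)) × (Fin (f i') × Fin (f i'))) =
      Fintype.card Γ := by
    rw [Fintype.card_sigma]
    rw [← hcomplete]
    refine Finset.sum_congr rfl fun i _ => ?_
    simp [sq]
  have e : ((i' : Fin (k + 1)) × (Fin (f i') × Fin (f i'))) ≃ Γ := Fintype.equivOfCardEq ecard
  have hPQ : P * Q = 1 := (Matrix.mul_eq_one_comm_of_equiv e.symm).mpr hQP
  -- intertwining relation
  have hRP : ∀ g : Γ, Rm g * P = P * Bm g := by
    intro g
    ext h x
    rcases x with ⟨i, a, b⟩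
    rw [Matrix.mul_apply, Matrix.mul_apply]
    have hL : ∑ h' : Γ, Rm g h h' * P h' ⟨i, (a, b)⟩ = ρ i (h * g) a b := by
      simp only [hRm, hP, ite_mul, one_mul, zero_mul]
      rw [Finset.sum_ite_eq' Finset.univ (h * g) (fun h' => ρ i h' a b)]
      simp
    rw [hL, ← Finset.univ_sigma_univ, Finset.sum_sigma]
    rw [Finset.sum_eq_single i]
    · simp only [hP, hBm]
      rw [Fintype.sum_prod_type]
      have hterm2 : ∀ (cc dd : Fin (f i)),
          ρ i h cc dd * blockDiagonal' (fun i' => (1 : Matrix (Fin (f i')) (Fin (f i')) ℂ) ⊗ₖ ρ i' g) ⟨i, (cc, dd)⟩ ⟨i, (a, b)⟩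
            = ρ i h cc dd * ((if cc = a then (1:ℂ) else 0) * ρ i g dd b) := by
        intro cc dd
        rw [Matrix.blockDiagonal'_apply_eq]
        rw [Matrix.kroneckerMap_apply, Matrix.one_apply]
      simp only [hterm2]
      have hsum : ∑ cc, ∑ dd, ρ i h cc dd * ((if cc = a then (1:ℂ) else 0) * ρ i g dd b)
          = ∑ dd, ρ i h a dd * ρ i g dd b := by
        rw [Finset.sum_comm]
        refine Finset.sum_congr rfl fun dd _ => ?_
        have hx : ∀ cc, ρ i h cc dd * ((if cc = a then (1:ℂ) else 0) * ρ i g dd b)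
            = if cc = a then ρ i h cc dd * ρ i g dd b else 0 := by
          intro cc; by_cases hcc : cc = a <;> simp [hcc]
        rw [Finset.sum_congr rfl fun cc _ => hx cc,
          Finset.sum_ite_eq' Finset.univ a (fun cc => ρ i h cc dd * ρ i g dd b)]
        simp
      rw [hsum, _root_.map_mul (ρ i) h g, Matrix.mul_apply]
    · intro j _ hji
      apply Finset.sum_eq_zero
      intro p _
      simp only [hBm]
      rw [Matrix.blockDiagonal'_apply_ne _ _ _ hji, mul_zero]
    · intro hi; exact absurd (Finset.mem_univ i) hi
  -- row sums of the derived weight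
  have hrow : ∀ (p : Fin n) (g : Γ), ∑ y : Fin n × Γ, derivedWeight G α W (p, g) y
      = ∑ l, W p l := by
    intro p g
    rw [Fintype.sum_prod_type]
    refine Finset.sum_congr rfl fun q _ => ?_
    by_cases hadj : G.Adj p q
    · show ∑ h : Γ, (if G.Adj p q ∧ h = g * α p q then W p q else 0) = W p q
      simp only [hadj, true_and]
      rw [Finset.sum_ite_eq' Finset.univ (g * α p q) (fun _ => W p q)]
      simp
    · show ∑ h : Γ, (if G.Adj p q ∧ h = g * α p q then W p q else 0) = W p q
      simp [hadj, hW0 p q hadj]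
  -- key pointwise identities
  have key1 : ∀ (g h : Γ) (p q : Fin n),
      (if (p, g) = (q, h) then (1:ℂ) else 0) = if (g, p) = (h, q) then (1:ℂ) else 0 := by
    intro g h p q
    simp only [Prod.mk.injEq]
    by_cases h1 : p = q <;> by_cases h2 : g = h <;> simp [h1, h2]
  have key2 : ∀ (g h : Γ) (p q : Fin n), derivedWeight G α W (p, g) (q, h)
      = ∑ g' : Γ, (if h = g * g' then (1:ℂ) else 0) * voltagePart G α W g' p q := by
    intro g h p q
    show (if G.Adj p q ∧ h = g * α p q then W p q else 0) = _
    simp only [voltagePart]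
    by_cases hadj : G.Adj p q
    · simp only [hadj, true_and]
      have hx : ∀ g' : Γ, (if h = g * g' then (1:ℂ) else 0)
            * (if α p q = g' then W p q else 0)
          = if g' = α p q then (if h = g * g' then (1:ℂ) else 0) * W p q else 0 := by
        intro g'
        by_cases h1 : g' = α p q
        · subst h1; simp
        · have h1' : ¬α p q = g' := fun hh => h1 hh.symm
          simp [h1, h1']
      rw [Finset.sum_congr rfl fun g' _ => hx g',
        Finset.sum_ite_eq' Finset.univ (α p q) (fun g' => (if h = g * g' then (1:ℂ) else 0) * W p q)]
      simp [ite_mul]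
    · simp [hadj]
  have key3 : ∀ (g h : Γ) (p q : Fin n),
      (if (p, g) = (q, h) then (∑ y : Fin n × Γ, derivedWeight G α W (p, g) y) else 0)
          - (1 - u) * (if (p, g) = (q, h) then (1:ℂ) else 0)
        = (if g = h then (1:ℂ) else 0) * D p q := by
    intro g h p q
    rw [hD, Matrix.sub_apply, Matrix.smul_apply, Matrix.diagonal_apply, Matrix.one_apply,
      hrow p g, smul_eq_mul]
    by_cases h1 : p = q <;> by_cases h2 : g = h <;>
      simp [h1, h2, Prod.ext_iff] <;> ring
  -- the reindexed covering matrix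
  set M' : Matrix (Γ × Fin n) (Γ × Fin n) ℂ :=
    1 - t • (∑ g : Γ, Rm g ⊗ₖ voltagePart G α W g) + c • ((1 : Matrix Γ Γ ℂ) ⊗ₖ D) with hM'
  have hsub : ((1 : Matrix (Fin n × Γ) (Fin n × Γ) ℂ) - t • derivedWeight G α W
        + c • (Matrix.diagonal (fun x => ∑ y, derivedWeight G α W x y) - (1 - u) • 1)).submatrix
        (Equiv.prodComm Γ (Fin n)) (Equiv.prodComm Γ (Fin n)) = M' := by
    ext x y
    rcases x with ⟨g, p⟩
    rcases y with ⟨h, q⟩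
    simp only [Matrix.submatrix_apply, Equiv.prodComm_apply, Prod.swap_prod_mk,
      Matrix.add_apply, Matrix.sub_apply, Matrix.smul_apply, smul_eq_mul, hM',
      Matrix.sum_apply, Matrix.kroneckerMap_apply, Matrix.one_apply,
      Matrix.diagonal_apply]
    simp only [hRm]
    rw [← key3 g h p q, ← key2 g h p q, key1 g h p q]
  have hdet1 : ((1 : Matrix (Fin n × Γ) (Fin n × Γ) ℂ) - t • derivedWeight G α W
        + c • (Matrix.diagonal (fun x => ∑ y, derivedWeight G α W x y) - (1 - u) • 1)).det
      = M'.det := by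
    rw [← Matrix.det_submatrix_equiv_self (Equiv.prodComm Γ (Fin n)), hsub]
  -- conjugated block matrix
  set N : Matrix ((((i' : Fin (k+1)) × (Fin (f i') × Fin (f i'))) × Fin n))
      ((((i' : Fin (k+1)) × (Fin (f i') × Fin (f i'))) × Fin n)) ℂ :=
    1 - t • (∑ g : Γ, Bm g ⊗ₖ voltagePart G α W g)
      + c • ((1 : Matrix ((i' : Fin (k+1)) × (Fin (f i') × Fin (f i')))
          ((i' : Fin (k+1)) × (Fin (f i') × Fin (f i'))) ℂ) ⊗ₖ D) with hN
  have hconj : M' * (P ⊗ₖ (1 : Matrix (Fin n) (Fin n) ℂ))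
      = (P ⊗ₖ (1 : Matrix (Fin n) (Fin n) ℂ)) * N := by
    have h1 : (∑ g : Γ, Rm g ⊗ₖ voltagePart G α W g) * (P ⊗ₖ (1 : Matrix (Fin n) (Fin n) ℂ))
        = (P ⊗ₖ (1 : Matrix (Fin n) (Fin n) ℂ)) * (∑ g : Γ, Bm g ⊗ₖ voltagePart G α W g) := by
      rw [Matrix.sum_mul, Matrix.mul_sum]
      refine Finset.sum_congr rfl fun g _ => ?_
      rw [← Matrix.mul_kronecker_mul, ← Matrix.mul_kronecker_mul, hRP g,
        Matrix.one_mul, Matrix.mul_one]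
    have h2 : ((1 : Matrix Γ Γ ℂ) ⊗ₖ D) * (P ⊗ₖ (1 : Matrix (Fin n) (Fin n) ℂ))
        = (P ⊗ₖ (1 : Matrix (Fin n) (Fin n) ℂ))
          * ((1 : Matrix ((i' : Fin (k+1)) × (Fin (f i') × Fin (f i')))
              ((i' : Fin (k+1)) × (Fin (f i') × Fin (f i'))) ℂ) ⊗ₖ D) := by
      rw [← Matrix.mul_kronecker_mul, ← Matrix.mul_kronecker_mul, Matrix.one_mul,
        Matrix.mul_one, Matrix.one_mul, Matrix.mul_one]
    rw [hM', hN, Matrix.add_mul, Matrix.mul_add, Matrix.sub_mul, Matrix.mul_sub,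
      Matrix.one_mul, Matrix.mul_one, Matrix.smul_mul, Matrix.mul_smul,
      Matrix.smul_mul, Matrix.mul_smul, h1, h2]
  -- squarify
  set ee : ((((i' : Fin (k+1)) × (Fin (f i') × Fin (f i'))) × Fin n)) ≃ (Γ × Fin n) :=
    Equiv.prodCongr e (Equiv.refl (Fin n)) with hee
  set Psq : Matrix (Γ × Fin n) (Γ × Fin n) ℂ :=
    (P ⊗ₖ (1 : Matrix (Fin n) (Fin n) ℂ)).submatrix id (⇑ee.symm) with hPsq
  set Qsq : Matrix (Γ × Fin n) (Γ × Fin n) ℂ :=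
    (Q ⊗ₖ (1 : Matrix (Fin n) (Fin n) ℂ)).submatrix (⇑ee.symm) id with hQsq
  set Nsq : Matrix (Γ × Fin n) (Γ × Fin n) ℂ := N.submatrix (⇑ee.symm) (⇑ee.symm) with hNsq
  have hQPsq : Qsq * Psq = 1 := by
    have h := Matrix.submatrix_mul_equiv (Q ⊗ₖ (1 : Matrix (Fin n) (Fin n) ℂ))
      (P ⊗ₖ (1 : Matrix (Fin n) (Fin n) ℂ)) (⇑ee.symm) (Equiv.refl (Γ × Fin n)) (⇑ee.symm)
    simp only [Equiv.coe_refl] at h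
    rw [hQsq, hPsq, h, ← Matrix.mul_kronecker_mul, hQP, Matrix.one_mul,
      Matrix.one_kronecker_one, Matrix.submatrix_one_equiv]
  have hPQsq : Psq * Qsq = 1 := by
    have h := Matrix.submatrix_mul_equiv (P ⊗ₖ (1 : Matrix (Fin n) (Fin n) ℂ))
      (Q ⊗ₖ (1 : Matrix (Fin n) (Fin n) ℂ)) id ee.symm id
    rw [hPsq, hQsq, h, Matrix.submatrix_id_id, ← Matrix.mul_kronecker_mul, hPQ,
      Matrix.one_mul, Matrix.one_kronecker_one]
  have hconjsq : M' * Psq = Psq * Nsq := by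
    have h1 := Matrix.submatrix_mul_equiv M' (P ⊗ₖ (1 : Matrix (Fin n) (Fin n) ℂ))
      id (Equiv.refl (Γ × Fin n)) (⇑ee.symm)
    simp only [Equiv.coe_refl] at h1
    rw [Matrix.submatrix_id_id] at h1
    have h2 := Matrix.submatrix_mul_equiv (P ⊗ₖ (1 : Matrix (Fin n) (Fin n) ℂ)) N
      id ee.symm (⇑ee.symm)
    rw [hPsq, hNsq, h1, hconj, h2]
  have hdet2 : M'.det = N.det := by
    have hM'eq : M' = Psq * Nsq * Qsq := by
      calc M' = M' * (Psq * Qsq) := by rw [hPQsq, Matrix.mul_one]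
      _ = (M' * Psq) * Qsq := by rw [Matrix.mul_assoc]
      _ = Psq * Nsq * Qsq := by rw [hconjsq]
    have hinv : Qsq = Psq⁻¹ := (Matrix.inv_eq_right_inv hPQsq).symm
    have hunit : IsUnit Psq := ⟨⟨Psq, Qsq, hPQsq, hQPsq⟩, rfl⟩
    rw [hM'eq, hinv, Matrix.det_conj hunit Nsq, hNsq,
      Matrix.det_submatrix_equiv_self ee.symm N]
  -- block diagonal structure
  have hsigma : ∀ (i : Fin (k+1)) (x y : Fin (f i) × Fin (f i)),
      ((⟨i, x⟩ : (i' : Fin (k + 1)) × (Fin (f i') × Fin (f i'))) = ⟨i, y⟩) ↔ x = y := by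
    intro i x y
    constructor
    · intro h; exact eq_of_heq (Sigma.mk.inj_iff.mp h).2
    · rintro rfl; rfl
  set Es : ((((i' : Fin (k+1)) × (Fin (f i') × Fin (f i'))) × Fin n))
      ≃ ((i' : Fin (k+1)) × (Fin (f i') × (Fin (f i') × Fin n))) :=
    (Equiv.sigmaProdDistrib (fun i' => Fin (f i') × Fin (f i')) (Fin n)).trans
      (Equiv.sigmaCongrRight (fun i' => Equiv.prodAssoc (Fin (f i')) (Fin (f i')) (Fin n)))
    with hEs
  have hEs' : ∀ (i : Fin (k+1)) (a b : Fin (f i)) (p : Fin n),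
      Es.symm ⟨i, (a, (b, p))⟩ = (⟨i, (a, b)⟩, p) := fun _ _ _ _ => rfl
  set Mi : (i' : Fin (k+1)) → Matrix (Fin (f i') × Fin n) (Fin (f i') × Fin n) ℂ := fun i' =>
    1 - t • (∑ g : Γ, ρ i' g ⊗ₖ voltagePart G α W g)
      + c • ((1 : Matrix (Fin (f i')) (Fin (f i')) ℂ) ⊗ₖ D) with hMi
  have hblock : N.submatrix (⇑Es.symm) (⇑Es.symm)
      = blockDiagonal' (fun i' => (1 : Matrix (Fin (f i')) (Fin (f i')) ℂ) ⊗ₖ Mi i') := by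
    ext x y
    rcases x with ⟨i, a, b, p⟩
    rcases y with ⟨j, cc, dd, q⟩
    rw [Matrix.submatrix_apply, hEs' i a b p, hEs' j cc dd q]
    by_cases hij : i = j
    · subst hij
      rw [Matrix.blockDiagonal'_apply_eq]
      simp only [hN, hMi, Matrix.add_apply, Matrix.sub_apply, Matrix.smul_apply, smul_eq_mul,
        Matrix.sum_apply, Matrix.kroneckerMap_apply, hBm, Matrix.blockDiagonal'_apply_eq,
        Matrix.one_apply]
      by_cases hac : a = cc <;> by_cases hbd : b = dd <;> by_cases hpq : p = q <;>
        simp [hac, hbd, hpq, Prod.ext_iff, hsigma, Finset.mul_sum] <;> ring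
    · rw [Matrix.blockDiagonal'_apply_ne _ _ _ hij]
      have hne : ((⟨i, (a, b)⟩ : (i' : Fin (k + 1)) × (Fin (f i') × Fin (f i')))
          ≠ ⟨j, (cc, dd)⟩) := fun h => hij (congrArg Sigma.fst h)
      have hne2 : ((⟨i, (a, b)⟩, p) : (((i' : Fin (k+1)) × (Fin (f i') × Fin (f i'))) × Fin n))
          ≠ (⟨j, (cc, dd)⟩, q) := fun h => hne (congrArg Prod.fst h)
      simp only [hN, Matrix.add_apply, Matrix.sub_apply, Matrix.smul_apply, smul_eq_mul,
        Matrix.sum_apply, Matrix.kroneckerMap_apply, hBm,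
        Matrix.one_apply_ne hne2, Matrix.one_apply_ne hne]
      rw [Finset.sum_eq_zero (fun g _ => by
        rw [Matrix.blockDiagonal'_apply_ne _ _ _ hij, zero_mul])]
      ring
  have hdet3 : N.det = ∏ i', (Mi i').det ^ (f i') := by
    rw [← Matrix.det_submatrix_equiv_self Es.symm N, hblock, my_det_blockDiagonal']
    refine Finset.prod_congr rfl fun i' _ => ?_
    rw [Matrix.det_kronecker, Matrix.det_one, one_pow, one_mul, Fintype.card_fin]
  -- the trivial block
  haveI hs0 : Subsingleton (Fin (f 0)) := by rw [hf1]; infer_instance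
  set e0 : (Fin (f 0) × Fin n) ≃ Fin n :=
    ((finCongr hf1).prodCongr (Equiv.refl (Fin n))).trans (Equiv.uniqueProd (Fin n) (Fin 1))
    with he0
  have h0sub : (Mi 0).submatrix (⇑e0.symm) (⇑e0.symm) = 1 - t • W + c • D := by
    ext p q
    rw [Matrix.submatrix_apply]
    simp only [hMi, Matrix.add_apply, Matrix.sub_apply, Matrix.smul_apply, smul_eq_mul,
      Matrix.sum_apply, Matrix.kroneckerMap_apply, Matrix.one_apply, hρ1]
    have hfst : (e0.symm p).1 = (e0.symm q).1 := Subsingleton.elim _ _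
    have hsnd1 : (e0.symm p).2 = p := rfl
    have hsnd2 : (e0.symm q).2 = q := rfl
    have hcond : (e0.symm p = e0.symm q) ↔ p = q := Equiv.apply_eq_iff_eq e0.symm
    rw [if_pos hfst, hsnd1, hsnd2, if_congr hcond rfl rfl]
    have hS : ∑ g : Γ, (1 : ℂ) * voltagePart G α W g p q = W p q := by
      rw [Finset.sum_congr rfl (fun g _ => one_mul _), hsumW p q]
    rw [hS, one_mul]
  have h0 : (Mi 0).det = (1 - t • W + c • D).det := by
    rw [← Matrix.det_submatrix_equiv_self e0.symm (Mi 0), h0sub]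
  -- assemble
  have hp1 : ∀ z : ℂ, z ^ f 0 = z := by intro z; rw [hf1, pow_one]
  rw [hdet1, hdet2, hdet3, ← Finset.mul_prod_erase Finset.univ _ (Finset.mem_univ 0),
    hp1, h0]
end
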